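/- arXiv:1209.2882 — 4 statements merged into one kernel-verified Lean document; each statement's English description precedes it below -/
import Mathlib

section
/- Let p < q be positive integers and let P be the symmetric pyramid with three rows of lengths 2p+1, 2q+1, 2p+1. Let A ∈ sTab^≤(P) and set q' = part(RS(A)). If content(q') = content((2p+1, 2p+1, 2q+1)), then q' = (2q+1, 2p+1, 2p+1) or q' = (2q+1, 2p+2, 2p). -/
namespace BG

variable {α : Type*}

/-- One step of Robinson–Schensted row insertion: insert `x` into a weakly
increasing row, bumping the leftmost entry strictly greater than `x`. -/
def rowInsert [LinearOrder α] : List α → α → List α × Option α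
  | [], x => ([x], none)
  | y :: ys, x =>
    if x < y then (x :: ys, some y)
    else
      let p := rowInsert ys x
      (y :: p.1, p.2)

/-- Insert a letter into a tableau (list of rows, top row first) by
Robinson–Schensted row insertion. -/
def insertT [LinearOrder α] : List (List α) → α → List (List α)
  | [], x => [[x]]
  | r :: rs, x =>
    match rowInsert r x with
    | (r', none) => r' :: rs
    | (r', some y) => r' :: insertT rs y

/-- The insertion tableau of the Robinson–Schensted algorithm. -/
def RS [LinearOrder α] (w : List α) : List (List α) := w.foldl insertT []

/-- The partition underlying a tableau: the list of its row lengths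
(top row first, so weakly decreasing). -/
def part (T : List (List α)) : List ℕ := T.map List.length

/-- The reversed negation of a row. -/
def negRow [Neg α] (l : List α) : List α := l.reverse.map (fun x => -x)

/-- Every column of a left-justified array (list of rows, top to bottom) is
strictly decreasing from top to bottom, where entries must decrease strictly
across any gap occurring in the middle of a column. -/
def ColumnStrict [LT α] (B : List (List α)) : Prop :=
  ∀ j : ℕ, List.Chain' (fun x y => y < x) (B.filterMap (fun r => r[j]?))

/-- A left-justified array is row equivalent to column strict if its entries can
be permuted within rows so that every column is strictly decreasing. -/
def RowEquivColumnStrict [LT α] (A : List (List α)) : Prop :=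
  ∃ B, List.Forall₂ List.Perm A B ∧ ColumnStrict B

/-- Elementary Knuth moves on words of integers. -/
inductive KnuthStep : List ℤ → List ℤ → Prop
  | move1 (u v : List ℤ) (x y z : ℤ) (hxy : x ≤ y) (hyz : y < z) :
      KnuthStep (u ++ x :: z :: y :: v) (u ++ z :: x :: y :: v)
  | move2 (u v : List ℤ) (x y z : ℤ) (hxy : x < y) (hyz : y ≤ z) :
      KnuthStep (u ++ y :: x :: z :: v) (u ++ y :: z :: x :: v)

/-- Knuth equivalence of words of integers. -/
def KnuthEquiv : List ℤ → List ℤ → Prop := Relation.EqvGen KnuthStep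

/-- Generators of the τ-equivalence: Knuth moves (R1), negating the last letter
when its absolute value exceeds that of the previous letter (R2), and
transposing the last two letters when they have opposite signs (R3). -/
inductive TauStep : List ℤ → List ℤ → Prop
  | knuth (u v : List ℤ) : KnuthStep u v → TauStep u v
  | negLast (u : List ℤ) (b a : ℤ) (h : |b| < |a|) :
      TauStep (u ++ [b, a]) (u ++ [b, -a])
  | swapLast (u : List ℤ) (b a : ℤ) (h : b * a < 0) :
      TauStep (u ++ [b, a]) (u ++ [a, b])

/-- The τ-equivalence on words of integers. -/
def TauEquiv : List ℤ → List ℤ → Prop := Relation.EqvGen TauStep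

/-- A larger-smaller transposition. -/
inductive LSStep : List ℤ → List ℤ → Prop
  | swap (u w : List ℤ) (a b : ℤ) (h : b < a) :
      LSStep (u ++ a :: b :: w) (u ++ b :: a :: w)

/-- Dominance order on partitions (weakly decreasing lists of naturals). -/
def DomLE (μ ν : List ℕ) : Prop :=
  μ.sum = ν.sum ∧ ∀ k : ℕ, (μ.take k).sum ≤ (ν.take k).sum

/-- The content of a partition, given as a weakly decreasing list of naturals:
reverse to increasing order `(q₁ ≤ … ≤ q_m)`, prepend a zero part if necessary
so that the number of parts is odd, and take the multiset of
`⌊(qᵢ + i - 1)/2⌋` (1-indexed). -/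
def contentP (q : List ℕ) : Multiset ℕ :=
  let q₁ := q.reverse
  let q₂ := if q₁.length % 2 = 1 then q₁ else 0 :: q₁
  ↑((List.range q₂.length).map (fun i => (q₂.getD i 0 + i) / 2))

/-- Membership in `sTab^≤(P)` where `rows` is the list of row lengths of the
symmetric pyramid `P` (top to bottom): correct shape, skew-symmetry with
respect to the centre of the pyramid, weakly increasing rows, and all entries
in `ℤ` or all entries in `½ + ℤ`. -/
def MemSTabLe (rows : List ℕ) (A : List (List ℚ)) : Prop :=
  A.map List.length = rows ∧
  A.reverse.map negRow = A ∧
  (∀ row ∈ A, List.Chain' (· ≤ ·) row) ∧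
  ((∀ x ∈ A.flatten, ∃ z : ℤ, x = (z : ℚ)) ∨
   (∀ x ∈ A.flatten, ∃ z : ℤ, x = (z : ℚ) + 1 / 2))

section Aux

open List

variable {α : Type*}

/-- structural description of rowInsert -/
theorem rowInsert_struct [LinearOrder α] (r : List α) (x : α) (hr : r.Pairwise (· ≤ ·)) :
    (rowInsert r x = (r ++ [x], none) ∧ ∀ z ∈ r, z ≤ x) ∨
    (∃ ys y zs, r = ys ++ y :: zs ∧ rowInsert r x = (ys ++ x :: zs, some y) ∧ x < y ∧
      ∀ z ∈ ys, z ≤ x) := by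
  induction r with
  | nil => left; exact ⟨rfl, by simp⟩
  | cons w ws ih =>
    by_cases hxw : x < w
    · right
      exact ⟨[], w, ws, rfl, by simp [rowInsert, hxw], hxw, by simp⟩
    · rcases ih (List.pairwise_cons.mp hr).2 with ⟨h1, h2⟩ | ⟨ys, y, zs, heq, hrow, hxy, hys⟩
      · left
        constructor
        · simp [rowInsert, hxw, h1]
        · intro z hz
          rcases List.mem_cons.mp hz with rfl | hz
          · exact le_of_not_gt hxw
          · exact h2 _ hz
      · right
        refine ⟨w :: ys, y, zs, by rw [heq]; rfl, ?_, hxy, ?_⟩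
        · simp [rowInsert, hxw, hrow]
        · intro z hz
          rcases List.mem_cons.mp hz with rfl | hz
          · exact le_of_not_gt hxw
          · exact hys _ hz

/-- sortedness of result of bump case -/
theorem sorted_bump [LinearOrder α] {ys zs : List α} {x y : α}
    (hr : (ys ++ y :: zs).Pairwise (· ≤ ·)) (hxy : x < y) (hys : ∀ z ∈ ys, z ≤ x) :
    (ys ++ x :: zs).Pairwise (· ≤ ·) := by
  rw [List.pairwise_append] at hr ⊢
  obtain ⟨h1, h2, h3⟩ := hr
  rw [List.pairwise_cons] at h2 ⊢
  refine ⟨h1, ⟨fun b hb => le_of_lt (lt_of_lt_of_le hxy (h2.1 b hb)), h2.2⟩, ?_⟩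
  intro a ha c hc
  rcases List.mem_cons.mp hc with rfl | hc
  · exact hys a ha
  · exact h3 a ha c (List.mem_cons_of_mem _ hc)

/-- Row insertion of a whole word, collecting bumped letters. -/
def rowIns [LinearOrder α] : List α → List α → List α × List α
  | r, [] => (r, [])
  | r, x :: u =>
    match rowInsert r x with
    | (r', none) => rowIns r' u
    | (r', some y) => let q := rowIns r' u; (q.1, y :: q.2)

theorem rowIns_nil [LinearOrder α] (r : List α) : rowIns r [] = (r, []) := rfl

/-- decomposition of iterated insertT -/
theorem foldl_insertT_cons [LinearOrder α] (u : List α) :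
    ∀ (r : List α) (T : List (List α)),
    List.foldl insertT (r :: T) u = (rowIns r u).1 :: List.foldl insertT T (rowIns r u).2 := by
  induction u with
  | nil => intro r T; rfl
  | cons x u ih =>
    intro r T
    rcases h : rowInsert r x with ⟨r', o⟩
    cases o with
    | none =>
      have e1 : insertT (r :: T) x = r' :: T := by simp [insertT, h]
      have e2 : rowIns r (x :: u) = rowIns r' u := by simp [rowIns, h]
      rw [List.foldl_cons, e1, ih, e2]
    | some y =>
      have e1 : insertT (r :: T) x = r' :: insertT T y := by simp [insertT, h]
      have e2 : rowIns r (x :: u) = ((rowIns r' u).1, y :: (rowIns r' u).2) := by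
        simp [rowIns, h]
      rw [List.foldl_cons, e1, ih, e2]
      rfl

/-- inserting letters all larger than the row appends them -/
theorem rowIns_append [LinearOrder α] (u : List α) : ∀ (r : List α),
    r.Pairwise (· ≤ ·) → u.Pairwise (· ≤ ·) → (∀ z ∈ r, ∀ w ∈ u, z ≤ w) →
    rowIns r u = (r ++ u, []) := by
  induction u with
  | nil => intro r _ _ _; simp [rowIns_nil]
  | cons x u ih =>
    intro r hr hu hcross
    have hx : ∀ z ∈ r, z ≤ x := fun z hz => hcross z hz x (by simp)
    have hins : rowInsert r x = (r ++ [x], none) := by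
      rcases rowInsert_struct r x hr with ⟨h1, _⟩ | ⟨ys, y, zs, heq, _, hxy, _⟩
      · exact h1
      · exact absurd (hx y (by rw [heq]; simp)) (not_le.mpr hxy)
    have e2 : rowIns r (x :: u) = rowIns (r ++ [x]) u := by simp [rowIns, hins]
    rw [e2, ih]
    · simp
    · rw [List.pairwise_append]
      exact ⟨hr, by simp, by simpa using hx⟩
    · exact (List.pairwise_cons.mp hu).2
    · intro z hz w hw
      rcases List.mem_append.mp hz with hz | hz
      · exact hcross z hz w (List.mem_cons_of_mem _ hw)
      · simp at hz
        subst hz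
        exact (List.pairwise_cons.mp hu).1 w hw

theorem sublist_of_notMem_prefix : ∀ (l1 : List α) {l2 sub : List α},
    sub <+ l1 ++ l2 → (∀ a ∈ sub, a ∉ l1) → sub <+ l2 := by
  intro l1
  induction l1 with
  | nil => intro l2 sub h _; simpa using h
  | cons b l1 ih =>
    intro l2 sub h hnot
    rcases List.sublist_cons_iff.mp h with h' | ⟨t, rfl, ht⟩
    · exact ih h' (fun a ha => fun hmem => hnot a ha (List.mem_cons_of_mem _ hmem))
    · exact (hnot b (List.mem_cons_self) (List.mem_cons_self)).elim

theorem sublist_of_concat {l : List α} {x : α} {sub : List α}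
    (h : sub <+ l ++ [x]) (hx : x ∉ sub) : sub <+ l := by
  have h' : sub.reverse <+ x :: l.reverse := by
    have := h.reverse
    simpa using this
  rcases List.sublist_cons_iff.mp h' with h'' | ⟨t, ht, _⟩
  · have := h''.reverse
    simpa using this
  · exact absurd (List.mem_reverse.mp (ht ▸ List.mem_cons_self)) hx

theorem rowIns_spec [LinearOrder α] (u : List α) : ∀ (r : List α),
    r.Pairwise (· ≤ ·) → u.Pairwise (· ≤ ·) →
    (rowIns r u).1.Pairwise (· ≤ ·) ∧ (rowIns r u).2 <+ r ∧
    (∀ w ∈ (rowIns r u).2, ∃ v ∈ u, v < w) ∧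
    (rowIns r u).1.length + (rowIns r u).2.length = r.length + u.length ∧
    r.length ≤ (rowIns r u).1.length := by
  induction u with
  | nil =>
    intro r hr _
    exact ⟨hr, by simp [rowIns_nil], by simp [rowIns_nil], by simp [rowIns_nil],
      by simp [rowIns_nil]⟩
  | cons x u ih =>
    intro r hr hu
    have hxu : ∀ v ∈ u, x ≤ v := (List.pairwise_cons.mp hu).1
    have hu' : u.Pairwise (· ≤ ·) := (List.pairwise_cons.mp hu).2
    rcases rowInsert_struct r x hr with ⟨hins, hx⟩ | ⟨ys, y, zs, heq, hrow, hxy, hys⟩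
    · have e2 : rowIns r (x :: u) = rowIns (r ++ [x]) u := by simp [rowIns, hins]
      have hr1 : (r ++ [x]).Pairwise (· ≤ ·) := by
        rw [List.pairwise_append]
        exact ⟨hr, by simp, by simpa using hx⟩
      obtain ⟨s1, s2, s3, s4, s5⟩ := ih (r ++ [x]) hr1 hu'
      rw [e2]
      refine ⟨s1, ?_, ?_, ?_, ?_⟩
      · refine sublist_of_concat s2 ?_
        intro hmem
        obtain ⟨v, hv, hvx⟩ := s3 x hmem
        exact absurd (hxu v hv) (not_le.mpr hvx)
      · intro w hw
        obtain ⟨v, hv, hvw⟩ := s3 w hw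
        exact ⟨v, List.mem_cons_of_mem _ hv, hvw⟩
      · simp only [List.length_append, List.length_cons, List.length_nil] at s4 ⊢
        omega
      · simp only [List.length_append, List.length_cons, List.length_nil] at s5
        omega
    · have e2 : rowIns r (x :: u) =
          ((rowIns (ys ++ x :: zs) u).1, y :: (rowIns (ys ++ x :: zs) u).2) := by
        simp [rowIns, hrow]
      have hr1 : (ys ++ x :: zs).Pairwise (· ≤ ·) := sorted_bump (heq ▸ hr) hxy hys
      obtain ⟨s1, s2, s3, s4, s5⟩ := ih (ys ++ x :: zs) hr1 hu'
      have e2a : (rowIns r (x :: u)).1 = (rowIns (ys ++ x :: zs) u).1 := by rw [e2]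
      have e2b : (rowIns r (x :: u)).2 = y :: (rowIns (ys ++ x :: zs) u).2 := by rw [e2]
      rw [e2a, e2b]
      have hgt : ∀ a ∈ (rowIns (ys ++ x :: zs) u).2, a ∉ ys ++ [x] := by
        intro a ha hmem
        obtain ⟨v, hv, hva⟩ := s3 a ha
        have hxa : x < a := lt_of_le_of_lt (hxu v hv) hva
        rcases List.mem_append.mp hmem with h' | h'
        · exact absurd (lt_of_le_of_lt (hys a h') hxa) (lt_irrefl a)
        · simp at h'; subst h'; exact lt_irrefl _ hxa
      have hzs : (rowIns (ys ++ x :: zs) u).2 <+ zs := by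
        refine sublist_of_notMem_prefix (ys ++ [x]) ?_ hgt
        simpa using s2
      refine ⟨s1, ?_, ?_, ?_, ?_⟩
      · rw [heq]
        exact List.Sublist.trans (List.Sublist.cons₂ y hzs)
          (List.sublist_append_right ys (y :: zs))
      · intro w hw
        rcases List.mem_cons.mp hw with rfl | hw
        · exact ⟨x, List.mem_cons_self, hxy⟩
        · obtain ⟨v, hv, hvw⟩ := s3 w hw
          exact ⟨v, List.mem_cons_of_mem _ hv, hvw⟩
      · have hlen : (ys ++ x :: zs).length = r.length := by rw [heq]; simp
        simp only [List.length_cons]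
        omega
      · have hlen : (ys ++ x :: zs).length = r.length := by rw [heq]; simp
        omega

/-- inserting a sorted word into the empty tableau -/
theorem foldl_insertT_nil [LinearOrder α] {u : List α} (hu : u.Pairwise (· ≤ ·)) (hne : u ≠ []) :
    List.foldl insertT ([] : List (List α)) u = [u] := by
  cases u with
  | nil => exact absurd rfl hne
  | cons x u =>
    have h0 : insertT ([] : List (List α)) x = [[x]] := rfl
    rw [List.foldl_cons, h0, foldl_insertT_cons,
      rowIns_append u [x] (by simp) (List.pairwise_cons.mp hu).2
        (by intro z hz w hw; simp at hz; subst hz; exact (List.pairwise_cons.mp hu).1 w hw)]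
    rfl

lemma coe_pair_swap (d e : ℕ) : (↑[d,e] : Multiset ℕ) = ↑[e,d] :=
  Multiset.coe_eq_coe.mpr (List.Perm.swap e d [])

lemma cancel_last {x y d e z : ℕ} (h : (↑[x,y,z] : Multiset ℕ) = ↑[d,e,z]) :
    (↑[x,y] : Multiset ℕ) = ↑[d,e] := by
  have h' : (↑[x,y] : Multiset ℕ) + ↑[z] = (↑[d,e] : Multiset ℕ) + ↑[z] := by
    rw [Multiset.coe_add, Multiset.coe_add]
    exact h
  exact add_right_cancel h'

lemma singleton_coe_eq {b e : ℕ} (h : (↑[b] : Multiset ℕ) = ↑[e]) : b = e := by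
  have := Multiset.coe_eq_coe.mp h
  exact (by simpa using this.mem_iff.mpr (List.mem_singleton.mpr rfl) : e = b).symm

lemma cancel_head {a s t : ℕ} (h : (↑[a,s] : Multiset ℕ) = ↑[a,t]) : s = t := by
  have h1 : (a ::ₘ (↑[s] : Multiset ℕ)) = a ::ₘ (↑[t] : Multiset ℕ) := by
    rw [Multiset.cons_coe, Multiset.cons_coe]; exact h
  exact singleton_coe_eq (Multiset.cons_inj_right a |>.mp h1)

lemma pair_cases {a b d e : ℕ} (h : (↑[a,b] : Multiset ℕ) = ↑[d,e]) :
    (a = d ∧ b = e) ∨ (a = e ∧ b = d) := by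
  have ha : a = d ∨ a = e := by
    have : a ∈ (↑[d,e] : Multiset ℕ) := h ▸ (by simp)
    simpa using this
  rcases ha with rfl | rfl
  · left; exact ⟨rfl, cancel_head h⟩
  · right
    refine ⟨rfl, ?_⟩
    rw [coe_pair_swap d a] at h
    exact cancel_head h

lemma contentP_three (x y z : ℕ) : contentP [x,y,z] = ↑[z/2, (y+1)/2, (x+2)/2] := by
  simp [contentP, List.range_succ]

lemma contentP_two (x y : ℕ) : contentP [x,y] = ↑[0, (y+1)/2, (x+2)/2] := by
  simp [contentP, List.range_succ]

lemma contentP_one (x : ℕ) : contentP [x] = ↑[x/2] := by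
  simp [contentP, List.range_succ]

lemma negRow_sorted {l : List ℤ} (h : l.Pairwise (· ≤ ·)) : (negRow l).Pairwise (· ≤ ·) := by
  rw [negRow, List.pairwise_map, List.pairwise_reverse]
  exact h.imp (fun {a b} hab => by omega)

/-- the shape of the RS tableau of a three-row word -/
theorem RS_three_rows {A M V : List ℤ} (hA : A.Pairwise (· ≤ ·)) (hM : M.Pairwise (· ≤ ·))
    (hV : V.Pairwise (· ≤ ·)) (hAne : A ≠ []) :
    (∃ x : ℕ, part (RS (A ++ M ++ V)) = [x]) ∨
    (∃ x y : ℕ, part (RS (A ++ M ++ V)) = [x, y]) ∨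
    (∃ x y z : ℕ, part (RS (A ++ M ++ V)) = [x, y, z] ∧ M.length ≤ x ∧ z ≤ y ∧ 0 < z ∧
      x + y + z = A.length + M.length + V.length) := by
  have hsplit : RS (A ++ M ++ V) =
      List.foldl insertT (List.foldl insertT (List.foldl insertT [] A) M) V := by
    rw [RS, List.foldl_append, List.foldl_append]
  rw [hsplit, foldl_insertT_nil hA hAne, foldl_insertT_cons]
  obtain ⟨t1, t2, _, t4, t5⟩ := rowIns_spec M A hA hM
  set R1 := (rowIns A M).1 with hR1
  set U1 := (rowIns A M).2 with hU1
  have hU1len : U1.length ≤ A.length := t2.length_le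
  have hU1sorted : U1.Pairwise (· ≤ ·) := List.Pairwise.sublist t2 hA
  have hR1M : M.length ≤ R1.length := by omega
  by_cases hU1e : U1 = []
  · rw [hU1e]
    have h00 : List.foldl insertT ([] : List (List ℤ)) ([] : List ℤ) = [] := rfl
    rw [h00, foldl_insertT_cons]
    obtain ⟨_, u2, _, _, _⟩ := rowIns_spec V R1 t1 hV
    set U2 := (rowIns R1 V).2 with hU2
    have hU2sorted : U2.Pairwise (· ≤ ·) := List.Pairwise.sublist u2 t1
    by_cases hU2e : U2 = []
    · rw [hU2e]
      left
      exact ⟨(rowIns R1 V).1.length, rfl⟩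
    · rw [foldl_insertT_nil hU2sorted hU2e]
      right; left
      exact ⟨(rowIns R1 V).1.length, U2.length, rfl⟩
  · rw [foldl_insertT_nil hU1sorted hU1e, foldl_insertT_cons]
    obtain ⟨v1, v2, _, v4, v5⟩ := rowIns_spec V R1 t1 hV
    set R1' := (rowIns R1 V).1 with hR1'
    set U2 := (rowIns R1 V).2 with hU2
    have hU2sorted : U2.Pairwise (· ≤ ·) := List.Pairwise.sublist v2 t1
    rw [foldl_insertT_cons]
    obtain ⟨_, w2, _, w4, w5⟩ := rowIns_spec U2 U1 hU1sorted hU2sorted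
    set R2' := (rowIns U1 U2).1 with hR2'
    set U3 := (rowIns U1 U2).2 with hU3
    have hU3len : U3.length ≤ U1.length := w2.length_le
    by_cases hU3e : U3 = []
    · rw [hU3e]
      have h00 : List.foldl insertT ([] : List (List ℤ)) ([] : List ℤ) = [] := rfl
      rw [h00]
      right; left
      exact ⟨R1'.length, R2'.length, rfl⟩
    · have hU3sorted : U3.Pairwise (· ≤ ·) := List.Pairwise.sublist w2 hU1sorted
      rw [foldl_insertT_nil hU3sorted hU3e]
      right; right
      exact ⟨R1'.length, R2'.length, U3.length, rfl, by omega, by omega,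
        List.length_pos_iff.mpr hU3e, by omega⟩
end Aux


/-- Let `p < q` be positive integers and let `P` be the symmetric pyramid with
three rows of lengths `2p+1, 2q+1, 2p+1`.  An element `A ∈ sTab^≤(P)` is given
by its top row `a_1 ≤ … ≤ a_{2p+1}` and the first half `b_1 ≤ … ≤ b_q ≤ 0` of
its middle row; `word(A)` reads the three rows in order.  If
`content(part(RS(A))) = content((2p+1, 2p+1, 2q+1))` then
`part(RS(A)) = (2q+1, 2p+1, 2p+1)` or `part(RS(A)) = (2q+1, 2p+2, 2p)`. -/
theorem stmt8 (p q : ℕ) (hp : 0 < p) (hpq : p < q)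
    (a : Fin (2 * p + 1) → ℤ) (b : Fin q → ℤ)
    (ha : Monotone a) (hb : Monotone b) (hb0 : b ⟨q - 1, by omega⟩ ≤ 0)
    (hcont : contentP (part (RS (List.ofFn a ++
        (List.ofFn b ++ [0] ++ negRow (List.ofFn b)) ++ negRow (List.ofFn a)))) =
      contentP [2 * q + 1, 2 * p + 1, 2 * p + 1]) :
    part (RS (List.ofFn a ++ (List.ofFn b ++ [0] ++ negRow (List.ofFn b)) ++
        negRow (List.ofFn a))) = [2 * q + 1, 2 * p + 1, 2 * p + 1] ∨
    part (RS (List.ofFn a ++ (List.ofFn b ++ [0] ++ negRow (List.ofFn b)) ++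
        negRow (List.ofFn a))) = [2 * q + 1, 2 * p + 2, 2 * p] := by
  have hLA : (List.ofFn a).Pairwise (· ≤ ·) :=
    List.pairwise_ofFn.mpr (by intro i j hij; exact ha hij.le)
  have hLB : (List.ofFn b).Pairwise (· ≤ ·) :=
    List.pairwise_ofFn.mpr (by intro i j hij; exact hb hij.le)
  have hb_le0 : ∀ z ∈ List.ofFn b, z ≤ 0 := by
    intro z hz
    obtain ⟨i, rfl⟩ := List.mem_ofFn.mp hz
    refine le_trans (hb ?_) hb0
    rw [Fin.le_def]
    have := i.isLt
    simp
    omega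
  have hnegb_ge0 : ∀ z ∈ negRow (List.ofFn b), 0 ≤ z := by
    intro z hz
    rw [negRow, List.mem_map] at hz
    obtain ⟨w, hw, rfl⟩ := hz
    rw [List.mem_reverse] at hw
    simpa using hb_le0 w hw
  have hnegb_sorted : (negRow (List.ofFn b)).Pairwise (· ≤ ·) := negRow_sorted hLB
  have hM_sorted : (List.ofFn b ++ [0] ++ negRow (List.ofFn b)).Pairwise (· ≤ ·) := by
    rw [List.pairwise_append, List.pairwise_append]
    refine ⟨⟨hLB, by simp, ?_⟩, hnegb_sorted, ?_⟩
    · intro x hx y hy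
      simp at hy
      subst hy
      exact hb_le0 x hx
    · intro x hx y hy
      rcases List.mem_append.mp hx with hx | hx
      · exact le_trans (hb_le0 x hx) (hnegb_ge0 y hy)
      · simp at hx
        subst hx
        exact hnegb_ge0 y hy
  have hV_sorted : (negRow (List.ofFn a)).Pairwise (· ≤ ·) := negRow_sorted hLA
  have hAne : List.ofFn a ≠ [] := by
    refine List.length_pos_iff.mp ?_
    rw [List.length_ofFn]
    omega
  have hlenA : (List.ofFn a).length = 2*p+1 := by simp
  have hlenM : (List.ofFn b ++ [0] ++ negRow (List.ofFn b)).length = 2*q+1 := by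
    simp [negRow]
    omega
  have hlenV : (negRow (List.ofFn a)).length = 2*p+1 := by simp [negRow]
  rcases RS_three_rows hLA hM_sorted hV_sorted hAne with
    ⟨x, hpart⟩ | ⟨x, y, hpart⟩ | ⟨x, y, z, hpart, hx, hzy, hz0, hsum⟩
  · rw [hpart, contentP_one, contentP_three] at hcont
    have hcard := congrArg Multiset.card hcont
    simp at hcard
  · rw [hpart, contentP_two, contentP_three] at hcont
    have h0 : (0:ℕ) ∈ (↑[(2*p+1)/2, (2*p+1+1)/2, (2*q+1+2)/2] : Multiset ℕ) :=
      hcont ▸ (by simp)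
    simp only [Multiset.mem_coe, List.mem_cons, List.not_mem_nil, or_false] at h0
    omega
  · rw [hlenA, hlenM, hlenV] at hsum
    rw [hlenM] at hx
    rw [hpart] at hcont
    simp only [contentP_three] at hcont
    have e1 : (2*p+1)/2 = p := by omega
    have e2 : (2*p+1+1)/2 = p+1 := by omega
    have e3 : (2*q+1+2)/2 = q+1 := by omega
    rw [e1, e2, e3] at hcont
    have hC : (x+2)/2 ∈ (↑[p, p+1, q+1] : Multiset ℕ) := hcont ▸ (by simp)
    simp only [Multiset.mem_coe, List.mem_cons, List.not_mem_nil, or_false] at hC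
    have hCq : (x+2)/2 = q+1 ∧ x = 2*q+1 := by omega
    rw [hCq.1] at hcont
    rcases pair_cases (cancel_last hcont) with ⟨h1, h2⟩ | ⟨h1, h2⟩
    · have hyz : (y = 2*p+1 ∧ z = 2*p+1) ∨ (y = 2*p+2 ∧ z = 2*p) := by omega
      rcases hyz with ⟨hy, hz⟩ | ⟨hy, hz⟩
      · left
        rw [hpart, hCq.2, hy, hz]
      · right
        rw [hpart, hCq.2, hy, hz]
    · omega


end BG
end

section
/- Let l > m be even positive integers. Then content((m, l, l)) = {m/2, l/2, (l+2)/2}, and the partitions of 2l+m whose content equals content((m, l, l)) are exactly (m, l, l), (m, l−1, l+1) and (m+1, l−1, l) (parts listed in increasing order). -/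
namespace BG

variable {α : Type*}

lemma content3 (a b c : ℕ) : contentP [a,b,c] = {c/2, (b+1)/2, (a+2)/2} := by
  simp [contentP, List.range_succ]; rfl

lemma content2 (a b : ℕ) : contentP [a,b] = {0, (b+1)/2, (a+2)/2} := by
  simp [contentP, List.range_succ]; rfl

lemma card_contentP (q : List ℕ) :
    (contentP q).card = if q.length % 2 = 1 then q.length else q.length + 1 := by
  simp [contentP]; split <;> simp

/-- Let `l > m` be even positive integers.  Then
`content((m, l, l)) = {m/2, l/2, (l+2)/2}`, and the partitions of `2l + m`
(weakly decreasing lists of positive naturals) whose content equals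
`content((m, l, l))` are exactly `(m, l, l)`, `(m, l-1, l+1)` and
`(m+1, l-1, l)` (parts listed here in increasing order, i.e. the decreasing
lists `[l, l, m]`, `[l+1, l-1, m]` and `[l, l-1, m+1]`). -/
theorem stmt11 (l m : ℕ) (hm : 0 < m) (hml : m < l) (hl2 : 2 ∣ l) (hm2 : 2 ∣ m) :
    contentP [l, l, m] = ({m / 2, l / 2, (l + 2) / 2} : Multiset ℕ) ∧
    ∀ q : List ℕ, List.Chain' (· ≥ ·) q → (∀ x ∈ q, 0 < x) → q.sum = 2 * l + m →
      (contentP q = contentP [l, l, m] ↔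
        q = [l, l, m] ∨ q = [l + 1, l - 1, m] ∨ q = [l, l - 1, m + 1]) := by
  have h1 : contentP [l, l, m] = ({m / 2, l / 2, (l + 2) / 2} : Multiset ℕ) := by
    rw [content3]
    have : (l + 1) / 2 = l / 2 := by omega
    rw [this]
  refine ⟨h1, fun q hchain hpos hsum => ?_⟩
  constructor
  · intro hq
    have hcard : (contentP q).card = 3 := by rw [hq, h1]; rfl
    rw [card_contentP] at hcard
    have hlen : q.length = 2 ∨ q.length = 3 := by split at hcard <;> omega
    rcases hlen with hlen | hlen
    · obtain ⟨a, b, rfl⟩ := List.length_eq_two.mp hlen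
      rw [content2, h1] at hq
      have h0 : (0 : ℕ) ∈ ({m / 2, l / 2, (l + 2) / 2} : Multiset ℕ) := by
        rw [← hq]; simp
      simp [Multiset.mem_cons, Multiset.mem_singleton] at h0
      omega
    · obtain ⟨a, b, c, rfl⟩ := List.length_eq_three.mp hlen
      rw [content3, h1] at hq
      simp only [List.Chain', List.isChain_cons_cons, List.isChain_singleton, and_true, ge_iff_le] at hchain
      simp only [List.sum_cons, List.sum_nil, add_zero] at hsum
      have m1 : c / 2 ∈ ({m / 2, l / 2, (l + 2) / 2} : Multiset ℕ) := by rw [← hq]; simp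
      have m2 : (b + 1) / 2 ∈ ({m / 2, l / 2, (l + 2) / 2} : Multiset ℕ) := by rw [← hq]; simp
      have m3 : (a + 2) / 2 ∈ ({m / 2, l / 2, (l + 2) / 2} : Multiset ℕ) := by rw [← hq]; simp
      have m4 : m / 2 ∈ ({c / 2, (b + 1) / 2, (a + 2) / 2} : Multiset ℕ) := by rw [hq]; simp
      have m5 : l / 2 ∈ ({c / 2, (b + 1) / 2, (a + 2) / 2} : Multiset ℕ) := by rw [hq]; simp
      have m6 : (l + 2) / 2 ∈ ({c / 2, (b + 1) / 2, (a + 2) / 2} : Multiset ℕ) := by rw [hq]; simp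
      simp only [Multiset.insert_eq_cons, Multiset.mem_cons, Multiset.mem_singleton] at m1 m2 m3 m4 m5 m6
      simp only [List.cons.injEq, and_true]
      omega
  · rintro (rfl | rfl | rfl)
    · rfl
    · rw [content3, content3]
      have e1 : (l - 1 + 1) / 2 = (l + 1) / 2 := by omega
      have e2 : (l + 1 + 2) / 2 = (l + 2) / 2 := by omega
      rw [e1, e2]
    · rw [content3, content3]
      have e1 : (m + 1) / 2 = m / 2 := by omega
      have e2 : (l - 1 + 1) / 2 = (l + 1) / 2 := by omega
      rw [e1, e2]

end BG
end

section
/- Let p = (p_1 ≤ p_2 ≤ … ≤ p_m) be a partition with m odd (p_1 may be 0), and choose nonnegative integers r_1, …, r_k and s_1, …, s_l so that the multiset {p_1, p_2+1, …, p_m+m−1} equals the multiset {2r_1, …, 2r_k, 2s_1+1, …, 2s_l+1}. If p has domino shape and an even number of boxes, then k = l + 1; if p has domino shape and an odd number of boxes, then k + 1 = l. -/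
namespace BG

def IsYoungSet (S : Finset (ℕ × ℕ)) : Prop :=
  (∀ p ∈ S, 1 ≤ p.1 ∧ 1 ≤ p.2) ∧
  ∀ p ∈ S, ∀ i j : ℕ, 1 ≤ i → 1 ≤ j → i ≤ p.1 → j ≤ p.2 → (i, j) ∈ S

def IsDominoSet (s : Finset (ℕ × ℕ)) : Prop :=
  ∃ r c : ℕ, 1 ≤ r ∧ 1 ≤ c ∧ (s = {(r, c), (r, c + 1)} ∨ s = {(r, c), (r + 1, c)})

structure DominoTableau (n : ℕ) where
  D : Fin n → Finset (ℕ × ℕ)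
  domino : ∀ i, IsDominoSet (D i)
  disj : ∀ i j, i ≠ j → Disjoint (D i) (D j)
  young : ∀ k : ℕ,
    IsYoungSet ((Finset.univ.filter (fun i : Fin n => (i : ℕ) < k)).biUnion D)

def DominoTableau.cells {n : ℕ} (R : DominoTableau n) : Finset (ℕ × ℕ) :=
  Finset.univ.biUnion R.D

structure OddDominoTableau (n : ℕ) where
  D : Fin n → Finset (ℕ × ℕ)
  domino : ∀ i, IsDominoSet (D i)
  disj : ∀ i j, i ≠ j → Disjoint (D i) (D j)
  zero_box : ∀ i, ((1 : ℕ), (1 : ℕ)) ∉ D i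
  young : ∀ k : ℕ,
    IsYoungSet (insert ((1 : ℕ), (1 : ℕ))
      ((Finset.univ.filter (fun i : Fin n => (i : ℕ) < k)).biUnion D))

def OddDominoTableau.cells {n : ℕ} (R : OddDominoTableau n) : Finset (ℕ × ℕ) :=
  insert ((1 : ℕ), (1 : ℕ)) (Finset.univ.biUnion R.D)

def rowLen (S : Finset (ℕ × ℕ)) (i : ℕ) : ℕ := (S.filter (fun p => p.1 = i)).card

def numRows (S : Finset (ℕ × ℕ)) : ℕ := S.sup Prod.fst

def partOf (S : Finset (ℕ × ℕ)) : List ℕ :=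
  (List.range (numRows S)).map (fun i => rowLen S (i + 1))

/-! ### Auxiliary machinery -/

/-- The sign of a cell by diagonal parity. -/
def sgn (n : ℕ) : ℤ := if n % 2 = 0 then 1 else -1

/-- The color balance of a set of cells. -/
def bal (S : Finset (ℕ × ℕ)) : ℤ := ∑ x ∈ S, sgn (x.1 + x.2)

lemma bal_domino {s : Finset (ℕ × ℕ)} (h : IsDominoSet s) : bal s = 0 := by
  obtain ⟨r, c, hr, hc, h | h⟩ := h <;> subst h
  · rw [bal, Finset.sum_pair (by simp)]
    rcases Nat.mod_two_eq_zero_or_one (r + c) with h | h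
    · have h2 : (r + (c + 1)) % 2 = 1 := by omega
      simp [sgn, h, h2]
    · have h2 : (r + (c + 1)) % 2 = 0 := by omega
      simp [sgn, h, h2]
  · rw [bal, Finset.sum_pair (by simp)]
    rcases Nat.mod_two_eq_zero_or_one (r + c) with h | h
    · have h2 : (r + 1 + c) % 2 = 1 := by omega
      simp [sgn, h, h2]
    · have h2 : (r + 1 + c) % 2 = 0 := by omega
      simp [sgn, h, h2]

lemma bal_cells_even {n : ℕ} (R : DominoTableau n) : bal R.cells = 0 := by
  rw [DominoTableau.cells, bal, Finset.sum_biUnion (fun i _ j _ hij => R.disj i j hij)]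
  exact Finset.sum_eq_zero fun i _ => bal_domino (R.domino i)

lemma bal_cells_odd {n : ℕ} (R : OddDominoTableau n) : bal R.cells = 1 := by
  have hnot : ((1 : ℕ), (1 : ℕ)) ∉ Finset.univ.biUnion R.D := by
    simp only [Finset.mem_biUnion]
    rintro ⟨i, -, hi⟩
    exact R.zero_box i hi
  rw [OddDominoTableau.cells, bal, Finset.sum_insert hnot,
    Finset.sum_biUnion (fun i _ j _ hij => R.disj i j hij)]
  have h0 : ∑ x : Fin n, ∑ i ∈ R.D x, sgn (i.1 + i.2) = 0 :=
    Finset.sum_eq_zero fun i _ => bal_domino (R.domino i)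
  rw [h0]
  simp [sgn]

lemma young_row (S : Finset (ℕ × ℕ)) (hY : IsYoungSet S) (r : ℕ) :
    S.filter (fun x => x.1 = r) = (Finset.Icc 1 (rowLen S r)).image (fun j => (r, j)) := by
  have hmem : ∀ j, (r, j) ∈ S → ∀ j', 1 ≤ j' → j' ≤ j → (r, j') ∈ S := by
    intro j hj j' h1 h2
    exact hY.2 (r, j) hj r j' (hY.1 _ hj).1 h1 le_rfl h2
  have hinj : Function.Injective (fun j : ℕ => (r, j)) := fun a b h => by simpa using h
  have hle : ∀ j, (r, j) ∈ S → j ≤ rowLen S r := by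
    intro j hj
    have hsub : (Finset.Icc 1 j).image (fun j' => (r, j')) ⊆ S.filter (fun x => x.1 = r) := by
      intro x hx
      simp only [Finset.mem_image, Finset.mem_Icc] at hx
      obtain ⟨j', ⟨h1, h2⟩, rfl⟩ := hx
      exact Finset.mem_filter.mpr ⟨hmem j hj j' h1 h2, rfl⟩
    have h := Finset.card_le_card hsub
    rwa [Finset.card_image_of_injective _ hinj, Nat.card_Icc, Nat.add_sub_cancel] at h
  ext x
  simp only [Finset.mem_filter, Finset.mem_image, Finset.mem_Icc]
  constructor
  · rintro ⟨hx, hr⟩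
    obtain ⟨x1, x2⟩ := x
    simp only at hr
    subst hr
    exact ⟨x2, ⟨(hY.1 _ hx).2, hle _ hx⟩, rfl⟩
  · rintro ⟨j, ⟨h1, h2⟩, rfl⟩
    refine ⟨?_, rfl⟩
    by_contra hnot
    have hsub : S.filter (fun x => x.1 = r) ⊆ (Finset.Icc 1 (j - 1)).image (fun j' => (r, j')) := by
      intro x hx
      obtain ⟨hxS, hxr⟩ := Finset.mem_filter.mp hx
      obtain ⟨x1, x2⟩ := x
      simp only at hxr
      subst hxr
      refine Finset.mem_image.mpr ⟨x2, Finset.mem_Icc.mpr ⟨(hY.1 _ hxS).2, ?_⟩, rfl⟩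
      by_contra hgt
      push_neg at hgt
      exact hnot (hmem x2 hxS j h1 (by omega))
    have h := Finset.card_le_card hsub
    rw [Finset.card_image_of_injective _ hinj, Nat.card_Icc] at h
    have : rowLen S r ≤ j - 1 := by simpa [rowLen] using (by omega : (S.filter (fun x => x.1 = r)).card ≤ j - 1)
    omega

def rowBal (L r : ℕ) : ℤ := if L % 2 = 0 then 0 else if r % 2 = 0 then -1 else 1

lemma sum_sgn_Icc (r L : ℕ) : ∑ j ∈ Finset.Icc 1 L, sgn (r + j) = rowBal L r := by
  induction L with
  | zero => simp [rowBal]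
  | succ L ih =>
    rw [Finset.sum_Icc_succ_top (by omega), ih]
    rcases Nat.mod_two_eq_zero_or_one L with hL | hL <;>
      rcases Nat.mod_two_eq_zero_or_one r with hr | hr
    · have h1 : (L + 1) % 2 = 1 := by omega
      have h2 : (r + (L + 1)) % 2 = 1 := by omega
      simp [rowBal, sgn, hL, hr, h1, h2]
    · have h1 : (L + 1) % 2 = 1 := by omega
      have h2 : (r + (L + 1)) % 2 = 0 := by omega
      simp [rowBal, sgn, hL, hr, h1, h2]
    · have h1 : (L + 1) % 2 = 0 := by omega
      have h2 : (r + (L + 1)) % 2 = 0 := by omega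
      simp [rowBal, sgn, hL, hr, h1, h2]
    · have h1 : (L + 1) % 2 = 0 := by omega
      have h2 : (r + (L + 1)) % 2 = 1 := by omega
      simp [rowBal, sgn, hL, hr, h1, h2]

lemma bal_eq_sum (S : Finset (ℕ × ℕ)) (hY : IsYoungSet S) (M : ℕ) (hM : numRows S ≤ M) :
    bal S = ∑ r ∈ Finset.range M, rowBal (rowLen S (r + 1)) (r + 1) := by
  have hS : S = (Finset.range M).biUnion (fun r => S.filter (fun x => x.1 = r + 1)) := by
    ext x
    simp only [Finset.mem_biUnion, Finset.mem_range, Finset.mem_filter]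
    constructor
    · intro hx
      have h1 := (hY.1 _ hx).1
      have h2 : x.1 ≤ numRows S := Finset.le_sup hx
      exact ⟨x.1 - 1, by omega, hx, by omega⟩
    · rintro ⟨r, -, hx, -⟩; exact hx
  have hdisj : (↑(Finset.range M) : Set ℕ).PairwiseDisjoint
      (fun r => S.filter (fun x => x.1 = r + 1)) := by
    intro a _ b _ hab
    apply Finset.disjoint_left.mpr
    intro x hx hy
    obtain ⟨-, h1⟩ := Finset.mem_filter.mp hx
    obtain ⟨-, h2⟩ := Finset.mem_filter.mp hy
    omega
  conv_lhs => rw [bal, hS]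
  rw [Finset.sum_biUnion hdisj]
  refine Finset.sum_congr rfl fun r _ => ?_
  rw [young_row S hY (r + 1),
    Finset.sum_image (fun a _ b _ h => by simpa using h)]
  exact sum_sgn_Icc (r + 1) (rowLen S (r + 1))

lemma replicate_decomp (p : List ℕ) (hp : p.Pairwise (· ≤ ·)) :
    ∃ z, p = List.replicate z 0 ++ p.filter (fun x => x ≠ 0) := by
  induction p with
  | nil => exact ⟨0, rfl⟩
  | cons a p ih =>
    rw [List.pairwise_cons] at hp
    obtain ⟨ha, hp⟩ := hp
    by_cases h0 : a = 0
    · obtain ⟨z, hz⟩ := ih hp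
      subst h0
      refine ⟨z + 1, ?_⟩
      have : List.filter (fun x => x ≠ 0) (0 :: p) = List.filter (fun x => x ≠ 0) p := by simp
      rw [this, List.replicate_succ, List.cons_append, ← hz]
    · refine ⟨0, ?_⟩
      have hall : ∀ x ∈ a :: p, x ≠ 0 := by
        intro x hx
        rcases List.mem_cons.mp hx with rfl | hx
        · exact h0
        · exact fun h => h0 (Nat.le_zero.mp (h ▸ ha x hx))
      rw [List.filter_eq_self.mpr (fun x hx => by simpa using hall x hx)]
      rfl

lemma length_filter_eq_sum (P : ℕ → Bool) (m : ℕ) :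
    ((((List.range m).filter P).length : ℕ) : ℤ)
      = ∑ i ∈ Finset.range m, if P i then 1 else 0 := by
  induction m with
  | zero => simp
  | succ m ih =>
    rw [List.range_succ, List.filter_append, List.length_append, Finset.sum_range_succ, ← ih]
    by_cases h : P m <;> simp [h]

lemma sum_alt (m : ℕ) :
    ∑ r ∈ Finset.range m, (if (r + 1) % 2 = 0 then (1 : ℤ) else -1)
      = if m % 2 = 0 then 0 else -1 := by
  induction m with
  | zero => simp
  | succ m ih =>
    rw [Finset.sum_range_succ, ih]
    rcases Nat.mod_two_eq_zero_or_one m with h | h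
    · have h1 : (m + 1) % 2 = 1 := by omega
      simp [h, h1]
    · have h1 : (m + 1) % 2 = 0 := by omega
      simp [h, h1]

lemma key (p : List ℕ) (hpw : p.Pairwise (· ≤ ·)) (hodd : p.length % 2 = 1)
    (S : Finset (ℕ × ℕ)) (hY : IsYoungSet S)
    (hpart : partOf S = (p.filter (fun x => x ≠ 0)).reverse) :
    ((((List.range p.length).filter
        (fun i => (p.getD i 0 + i) % 2 = 1)).length : ℕ) : ℤ)
      - ((((List.range p.length).filter
        (fun i => (p.getD i 0 + i) % 2 = 0)).length : ℕ) : ℤ)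
      = 2 * bal S - 1 := by
  obtain ⟨z, hz⟩ := replicate_decomp p hpw
  set f := p.filter (fun x => x ≠ 0) with hf
  have hzt : p.length = z + f.length := by
    have := congrArg List.length hz
    simpa using this
  have hnum : numRows S = f.length := by
    have h2 := congrArg List.length hpart
    simpa [partOf] using h2
  set m := p.length with hm
  -- row lengths in terms of p
  have hrow : ∀ r, 1 ≤ r → r ≤ m → rowLen S r = p.getD (m - r) 0 := by
    intro r h1 h2
    by_cases hrt : r ≤ f.length
    · have hlt : r - 1 < numRows S := by omega
      have e1 : rowLen S r = (partOf S).getD (r - 1) 0 := by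
        rw [partOf, List.getD_eq_getElem _ _ (by simpa using hlt)]
        simp only [List.getElem_map, List.getElem_range]
        congr 1
        omega
      rw [e1, hpart]
      have hlt2 : r - 1 < f.reverse.length := by
        rw [List.length_reverse]; omega
      rw [List.getD_eq_getElem _ _ hlt2, List.getElem_reverse]
      have hlt3 : m - r < p.length := by omega
      rw [List.getD_eq_getElem _ _ hlt3]
      have e2 : p[m - r]'hlt3 = (List.replicate z 0 ++ f)[m - r]'(by rw [← hz]; exact hlt3) := by
        congr 1
      rw [e2, List.getElem_append_right (by simpa using by omega : (List.replicate z (0:ℕ)).length ≤ m - r)]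
      congr 1
      simp only [List.length_replicate]
      omega
    · have e0 : rowLen S r = 0 := by
        rw [rowLen, Finset.card_eq_zero, Finset.filter_eq_empty_iff]
        intro x hx
        have hle : x.1 ≤ numRows S := Finset.le_sup hx
        omega
      rw [e0]
      have hlt3 : m - r < p.length := by omega
      rw [List.getD_eq_getElem _ _ hlt3]
      have e2 : p[m - r]'hlt3 = (List.replicate z 0 ++ f)[m - r]'(by rw [← hz]; exact hlt3) := by
        congr 1
      rw [e2, List.getElem_append_left (by simpa using by omega : m - r < (List.replicate z (0:ℕ)).length),
        List.getElem_replicate]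
  have hbal := bal_eq_sum S hY m (by omega)
  rw [length_filter_eq_sum, length_filter_eq_sum]
  simp only [decide_eq_true_eq]
  rw [← Finset.sum_sub_distrib, ← Finset.sum_range_reflect]
  have hterm : ∀ r ∈ Finset.range m,
      ((if (p.getD (m - 1 - r) 0 + (m - 1 - r)) % 2 = 1 then (1 : ℤ) else 0)
        - (if (p.getD (m - 1 - r) 0 + (m - 1 - r)) % 2 = 0 then (1 : ℤ) else 0))
      = 2 * rowBal (rowLen S (r + 1)) (r + 1) + (if (r + 1) % 2 = 0 then 1 else -1) := by
    intro r hr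
    rw [Finset.mem_range] at hr
    have hQ : rowLen S (r + 1) = p.getD (m - 1 - r) 0 := by
      rw [hrow (r + 1) (by omega) (by omega)]
      congr 1
      omega
    set Q := p.getD (m - 1 - r) 0 with hQdef
    rw [hQ]
    rcases Nat.mod_two_eq_zero_or_one Q with hQ2 | hQ2 <;>
      rcases Nat.mod_two_eq_zero_or_one r with hr2 | hr2
    · have h1 : (Q + (m - 1 - r)) % 2 = 0 := by omega
      have h2 : (r + 1) % 2 = 1 := by omega
      simp [rowBal, h1, h2, hQ2]
    · have h1 : (Q + (m - 1 - r)) % 2 = 1 := by omega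
      have h2 : (r + 1) % 2 = 0 := by omega
      simp [rowBal, h1, h2, hQ2]
    · have h1 : (Q + (m - 1 - r)) % 2 = 1 := by omega
      have h2 : (r + 1) % 2 = 1 := by omega
      simp [rowBal, h1, h2, hQ2]
    · have h1 : (Q + (m - 1 - r)) % 2 = 0 := by omega
      have h2 : (r + 1) % 2 = 0 := by omega
      simp [rowBal, h1, h2, hQ2]
  rw [Finset.sum_congr rfl hterm, Finset.sum_add_distrib, ← Finset.mul_sum, sum_alt, ← hbal]
  rw [if_neg (by omega)]
  ring

/-- Let `p = (p_1 ≤ p_2 ≤ … ≤ p_m)` be a partition with `m` odd (`p_1` may be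
`0`), and let `k` (resp. `l`) be the number of even (resp. odd) members of the
multiset `{p_1, p_2 + 1, …, p_m + m - 1}`; equivalently `k` and `l` count the
`2rᵢ` and the `2sⱼ + 1` in the decomposition of that multiset.  If `p` has
domino shape and an even number of boxes, then `k = l + 1`; if `p` has domino
shape and an odd number of boxes, then `k + 1 = l`. -/
theorem stmt13 (p : List ℕ) (hps : List.Chain' (· ≤ ·) p)
    (hodd : p.length % 2 = 1) (k l : ℕ)
    (hk : k = ((List.range p.length).filter
      (fun i => (p.getD i 0 + i) % 2 = 0)).length)
    (hl : l = ((List.range p.length).filter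
      (fun i => (p.getD i 0 + i) % 2 = 1)).length) :
    ((∃ (n : ℕ) (R : DominoTableau n),
        partOf R.cells = (p.filter (fun x => x ≠ 0)).reverse) → k = l + 1) ∧
    ((∃ (n : ℕ) (R : OddDominoTableau n),
        partOf R.cells = (p.filter (fun x => x ≠ 0)).reverse) → k + 1 = l) := by
  have hpw : p.Pairwise (· ≤ ·) := List.isChain_iff_pairwise.mp hps
  constructor
  · rintro ⟨n, R, hpart⟩
    have hY : IsYoungSet R.cells := by
      have h := R.young n
      rwa [Finset.filter_true_of_mem (fun i _ => i.isLt)] at h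
    have hkey := key p hpw hodd R.cells hY hpart
    rw [bal_cells_even R, ← hk, ← hl] at hkey
    omega
  · rintro ⟨n, R, hpart⟩
    have hY : IsYoungSet R.cells := by
      have h := R.young n
      rwa [Finset.filter_true_of_mem (fun i _ => i.isLt)] at h
    have hkey := key p hpw hodd R.cells hY hpart
    rw [bal_cells_odd R, ← hk, ← hl] at hkey
    omega

end BG
end

section
/- Let R be a domino tableau with an even number of boxes and let c be a cycle of R. Then content(part(R)) = content(part(MT(R,c))). -/
namespace BG

/-- The label of a square: `-1` if either coordinate is `0`, the label of its
domino if it is a square of the tableau, and `∞` (i.e. `⊤`) otherwise. -/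
noncomputable def labelAt {n : ℕ} (R : DominoTableau n) (p : ℕ × ℕ) : WithTop ℤ :=
  if p.1 = 0 ∨ p.2 = 0 then ((-1 : ℤ) : WithTop ℤ)
  else if h : ∃ i : Fin n, p ∈ R.D i then (((h.choose : ℕ) : ℤ) : WithTop ℤ)
  else ⊤

/-- The fixed box of the domino `D(k)`: its box `(i, j)` with `i + j` odd. -/
noncomputable def fixedBox {n : ℕ} (R : DominoTableau n) (k : Fin n) : ℕ × ℕ :=
  if h : ∃ q ∈ R.D k, (q.1 + q.2) % 2 = 1 then h.choose else (0, 0)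

/-- The non-fixed box of the domino `D(k)`: its box `(i, j)` with `i + j` even. -/
noncomputable def varBox {n : ℕ} (R : DominoTableau n) (k : Fin n) : ℕ × ℕ :=
  if h : ∃ q ∈ R.D k, (q.1 + q.2) % 2 = 0 then h.choose else (0, 0)

/-- The domino `D'(k)`.  Let `F` be the fixed box of `D(k)`.  If the fixed box
is the lower or the right box of `D(k)`, let `E := (F.1 - 1, F.2 + 1)` (the
square diagonally below and to the right of `F`); otherwise let
`E := (F.1 + 1, F.2 - 1)`.  `D'(k)` consists of `F` together with the box
adjacent to `E` chosen so that the configuration formed by `D'(k)` and `E`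
has weakly increasing rows and strictly decreasing columns; comparing the
label `k` of `D'(k)` with the label of `E` makes this choice explicit. -/
noncomputable def Dprime {n : ℕ} (R : DominoTableau n) (k : Fin n) : Finset (ℕ × ℕ) :=
  let F := fixedBox R k
  let O := varBox R k
  if O = (F.1 + 1, F.2) ∨ O = (F.1, F.2 - 1) then
    if (((k : ℕ) : ℤ) : WithTop ℤ) < labelAt R (F.1 - 1, F.2 + 1) then
      {F, (F.1 - 1, F.2)}
    else {F, (F.1, F.2 + 1)}
  else
    if (((k : ℕ) : ℤ) : WithTop ℤ) < labelAt R (F.1 + 1, F.2 - 1) then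
      {F, (F.1, F.2 - 1)}
    else {F, (F.1 + 1, F.2)}

/-- The equivalence relation on labels generated by declaring `i ∼ j` whenever
`D(j)` and `D'(i)` share a box. -/
def cycleRel {n : ℕ} (R : DominoTableau n) : Fin n → Fin n → Prop :=
  Relation.EqvGen (fun i j => ((R.D j) ∩ (Dprime R i)).Nonempty)

/-- A cycle of a domino tableau: an equivalence class of the above relation. -/
def IsCycle {n : ℕ} (R : DominoTableau n) (c : Finset (Fin n)) : Prop :=
  ∃ i : Fin n, ∀ j, j ∈ c ↔ cycleRel R i j

/-- The cells of `MT(R, c)`: replace `D(k)` by `D'(k)` for every `k ∈ c`,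
adding a box (labeled `0`) in position `(1,1)` if the box in position `(1,1)`
was removed. -/
noncomputable def MTcells {n : ℕ} (R : DominoTableau n) (c : Finset (Fin n)) :
    Finset (ℕ × ℕ) :=
  let S := ((Finset.univ \ c).biUnion R.D) ∪ c.biUnion (fun i => Dprime R i)
  if ((1, 1) ∈ R.cells ∧ (1, 1) ∉ S) then insert (1, 1) S else S

/-! ### Auxiliary lemmas: multisets of naturals -/

lemma countP_le_split (a : ℕ) (X : Multiset ℕ) :
    X.countP (fun x => a ≤ x) = X.count a + X.countP (fun x => a + 1 ≤ x) := by
  induction X using Multiset.induction_on with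
  | empty => simp
  | cons b X ih =>
      rw [Multiset.countP_cons, Multiset.count_cons, Multiset.countP_cons]
      by_cases h1 : a = b
      · subst h1; simp [ih]; omega
      · have h4 : ¬ (a+1 ≤ b ∧ a ≤ b → False) → (a ≤ b ↔ a+1 ≤ b) := by omega
        by_cases h2 : a + 1 ≤ b
        · have h3 : a ≤ b := by omega
          simp [h1, h2, h3, ih]; omega
        · have h3 : ¬ a ≤ b := by omega
          simp [h1, h2, h3, ih]

lemma multiset_eq_of_countP_le (X Y : Multiset ℕ)
    (h : ∀ v, X.countP (fun x => v ≤ x) = Y.countP (fun x => v ≤ x)) : X = Y := by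
  ext a
  have h1 := countP_le_split a X
  have h2 := countP_le_split a Y
  have := h a; have := h (a + 1)
  omega
/-! ### Lower sets of naturals and interval reflection -/

lemma lower_finset_eq_Icc (A : Finset ℕ)
    (h1 : ∀ a ∈ A, 1 ≤ a)
    (h2 : ∀ a ∈ A, ∀ b, 1 ≤ b → b ≤ a → b ∈ A) :
    A = Finset.Icc 1 A.card := by
  rcases A.eq_empty_or_nonempty with h | h
  · subst h; simp
  · have hK := A.max'_mem h
    set K := A.max' h with hKdef
    have hsub : A ⊆ Finset.Icc 1 K := by
      intro a ha
      simp only [Finset.mem_Icc]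
      exact ⟨h1 a ha, A.le_max' a ha⟩
    have hsup : Finset.Icc 1 K ⊆ A := by
      intro b hb
      simp only [Finset.mem_Icc] at hb
      exact h2 K hK b hb.1 hb.2
    have hA : A = Finset.Icc 1 K := le_antisymm hsub hsup
    have hcard : A.card = K := by rw [hA, Nat.card_Icc]; omega
    rw [hcard]; exact hA

lemma map_reflect_range (m : ℕ) :
    (Multiset.range m).map (fun i => m - i) = (Finset.Icc 1 m).val := by
  induction m with
  | zero => simp
  | succ m ih =>
      rw [Multiset.range_succ, Multiset.map_cons]
      have h1 : (fun i => m + 1 - i) ∘ (fun i => i) = (fun i : ℕ => m + 1 - i) := rfl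
      have step : (Multiset.range m).map (fun i => m + 1 - i)
          = ((Multiset.range m).map (fun i => m - i)).map (fun x => x + 1) := by
        rw [Multiset.map_map]
        apply Multiset.map_congr rfl
        intro x hx
        simp only [Multiset.mem_range] at hx
        simp only [Function.comp_apply]
        omega
      rw [step, ih]
      have : Finset.Icc 1 (m + 1) = insert 1 ((Finset.Icc 1 m).image (fun x => x + 1)) := by
        ext x
        simp only [Finset.mem_Icc, Finset.mem_insert, Finset.mem_image]
        constructor
        · intro hx
          rcases Nat.eq_or_lt_of_le hx.1 with h | h
          · left; omega
          · right; exact ⟨x - 1, by omega, by omega⟩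
        · rintro (rfl | ⟨y, hy, rfl⟩)
          · omega
          · omega
      rw [this]
      rw [Finset.insert_val]
      have hnd : ((Finset.Icc 1 m).image (fun x => x + 1)).val
          = (Finset.Icc 1 m).val.map (fun x => x + 1) := by
        rw [Finset.image_val, Multiset.dedup_eq_self.mpr]
        exact Multiset.Nodup.map (fun a b => by omega) (Finset.Icc 1 m).nodup
      have hne : (1 : ℕ) ∉ (Finset.Icc 1 m).image (fun x => x + 1) := by
        simp only [Finset.mem_image, Finset.mem_Icc]
        rintro ⟨y, hy, h⟩; omega
      rw [Multiset.ndinsert_of_notMem hne, hnd]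
      simp [Nat.succ_sub_one]
/-! ### Young sets: rows and content -/

def oddCells (S : Finset (ℕ × ℕ)) : Finset (ℕ × ℕ) :=
  S.filter (fun p => (p.1 + p.2) % 2 = 1)

def mOfRows (S : Finset (ℕ × ℕ)) : ℕ :=
  if numRows S % 2 = 1 then numRows S else numRows S + 1

lemma mem_le_numRows {S : Finset (ℕ × ℕ)} {p : ℕ × ℕ} (hp : p ∈ S) :
    p.1 ≤ numRows S := Finset.le_sup hp

lemma mem_iff_le_rowLen {S : Finset (ℕ × ℕ)} (hS : IsYoungSet S) (r j : ℕ)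
    (hr : 1 ≤ r) (hj : 1 ≤ j) : (r, j) ∈ S ↔ j ≤ rowLen S r := by
  set A := (S.filter (fun p => p.1 = r)).image Prod.snd with hA
  have hcard : A.card = rowLen S r := by
    rw [hA, rowLen]
    apply Finset.card_image_of_injOn
    intro p hp q hq hpq
    simp only [Finset.mem_coe, Finset.mem_filter] at hp hq
    exact Prod.ext (hp.2.trans hq.2.symm) hpq
  have hmemA : ∀ a, a ∈ A ↔ (r, a) ∈ S := by
    intro a
    rw [hA]
    simp only [Finset.mem_image, Finset.mem_filter]
    constructor
    · rintro ⟨p, ⟨hpS, hp1⟩, hp2⟩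
      have : p = (r, a) := Prod.ext hp1 hp2
      rwa [this] at hpS
    · intro h; exact ⟨(r, a), ⟨h, rfl⟩, rfl⟩
  have hIcc : A = Finset.Icc 1 A.card := by
    apply lower_finset_eq_Icc
    · intro a ha; exact (hS.1 (r, a) ((hmemA a).mp ha)).2
    · intro a ha b hb1 hba
      rw [hmemA] at ha ⊢
      exact hS.2 (r, a) ha r b hr hb1 le_rfl hba
  rw [← hmemA, hIcc, hcard, Finset.mem_Icc]
  omega

lemma rowLen_zero_of_gt {S : Finset (ℕ × ℕ)} {r : ℕ} (h : numRows S < r) :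
    rowLen S r = 0 := by
  rw [rowLen, Finset.card_eq_zero, Finset.filter_eq_empty_iff]
  intro p hp hpr
  have := mem_le_numRows hp
  omega

lemma top_row_mem {S : Finset (ℕ × ℕ)} (hS : IsYoungSet S) (hne : S.Nonempty)
    {r : ℕ} (hr1 : 1 ≤ r) (hr2 : r ≤ numRows S) : (r, 1) ∈ S := by
  obtain ⟨p, hp, hsup⟩ := Finset.exists_mem_eq_sup S hne Prod.fst
  exact hS.2 p hp r 1 hr1 le_rfl (by rw [numRows] at hr2; omega) (hS.1 p hp).2

lemma numRows_pos {S : Finset (ℕ × ℕ)} (hS : IsYoungSet S) (hne : S.Nonempty) :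
    1 ≤ numRows S := by
  obtain ⟨p, hp⟩ := hne
  have h1 := (hS.1 p hp).1
  have h2 := mem_le_numRows hp
  omega

lemma contentP_eq_map {S : Finset (ℕ × ℕ)} (hS : IsYoungSet S) :
    contentP (partOf S)
      = (Finset.Icc 1 (mOfRows S)).val.map
          (fun r => (rowLen S r + (mOfRows S - r)) / 2) := by
  set N := numRows S with hN
  set m := mOfRows S with hm
  have hlen : (partOf S).length = N := by simp [partOf, hN]
  have hget : ∀ j, j < N → (partOf S).getD j 0 = rowLen S (j + 1) := by
    intro j hj
    rw [partOf, List.getD_eq_getElem?_getD]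
    rw [List.getElem?_map, List.getElem?_range hj]
    rfl
  have hrev : ∀ i, i < N → (partOf S).reverse.getD i 0 = rowLen S (N - i) := by
    intro i hi
    rw [List.getD_eq_getElem?_getD]
    have hi' : i < (partOf S).reverse.length := by rw [List.length_reverse, hlen]; exact hi
    rw [List.getElem?_eq_getElem hi', List.getElem_reverse]
    have h2 : (partOf S).length - 1 - i < N := by omega
    have := hget ((partOf S).length - 1 - i) (by omega)
    rw [List.getD_eq_getElem?_getD, List.getElem?_eq_getElem (by omega)] at this
    simp only [Option.getD_some] at this ⊢
    rw [this]
    congr 1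
    omega
  -- q₂.getD i 0 = rowLen S (m - i) for i < m
  set q₂ := if (partOf S).reverse.length % 2 = 1 then (partOf S).reverse
            else 0 :: (partOf S).reverse with hq₂
  have hq₂len : q₂.length = m := by
    rw [hq₂, hm, mOfRows]
    by_cases h : N % 2 = 1
    · simp [List.length_reverse, hlen, h, ← hN]
    · simp [List.length_reverse, hlen, h, ← hN]
  have hq₂get : ∀ i, i < m → q₂.getD i 0 = rowLen S (m - i) := by
    intro i hi
    rw [hq₂]
    by_cases h : N % 2 = 1
    · have hmN : m = N := by rw [hm, mOfRows, ← hN, if_pos h]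
      rw [if_pos (by rw [List.length_reverse, hlen]; exact h)]
      rw [hrev i (by omega), hmN]
    · have hmN : m = N + 1 := by rw [hm, mOfRows, ← hN, if_neg h]
      rw [if_neg (by rw [List.length_reverse, hlen]; exact h)]
      match i with
      | 0 =>
          simp only [List.getD_cons_zero]
          rw [hmN, Nat.sub_zero, rowLen_zero_of_gt (by omega)]
      | (k+1) =>
          simp only [List.getD_cons_succ]
          rw [hrev k (by omega)]
          congr 1
          omega
  have : contentP (partOf S) = ((List.range m).map (fun i => (q₂.getD i 0 + i) / 2) : List ℕ) := by
    rw [contentP]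
    simp only [← hq₂, hq₂len]
  rw [this]
  have hcoe : ((List.range m).map (fun i => (q₂.getD i 0 + i) / 2) : Multiset ℕ)
      = (Multiset.range m).map (fun i => (q₂.getD i 0 + i) / 2) := by
    rfl
  rw [hcoe]
  have hstep : (Multiset.range m).map (fun i => (q₂.getD i 0 + i) / 2)
      = (Multiset.range m).map
          ((fun r => (rowLen S r + (m - r)) / 2) ∘ (fun i => m - i)) := by
    apply Multiset.map_congr rfl
    intro i hi
    simp only [Multiset.mem_range] at hi
    simp only [Function.comp_apply]
    rw [hq₂get i hi]
    congr 1
    omega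
  rw [hstep, ← Multiset.map_map, map_reflect_range]
/-! ### Content is determined by the odd cells -/

lemma mOfRows_odd (S : Finset (ℕ × ℕ)) : mOfRows S % 2 = 1 := by
  rw [mOfRows]; by_cases h : numRows S % 2 = 1 <;> simp [h] <;> omega

lemma mOfRows_eq_oddCells {S : Finset (ℕ × ℕ)} (hS : IsYoungSet S) :
    mOfRows S = mOfRows (oddCells S) := by
  set N := numRows S with hN
  set MO := numRows (oddCells S) with hMO
  have hsub : MO ≤ N := Finset.sup_mono (Finset.filter_subset _ S)
  rcases S.eq_empty_or_nonempty with h | hne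
  · have h0 : numRows S = 0 := by rw [h]; simp [numRows]
    have h1 : numRows (oddCells S) = 0 := by
      have : oddCells S = ∅ := by rw [oddCells, h]; rfl
      rw [this]; simp [numRows]
    rw [mOfRows, mOfRows, h0, h1]
  · have hN1 : 1 ≤ N := numRows_pos hS hne
    by_cases hpar : N % 2 = 1
    · -- N odd : MO ∈ {N-1, N}
      have hMOge : N - 1 ≤ MO := by
        rcases Nat.eq_or_lt_of_le hN1 with h1 | h1
        · omega
        · have hmem : (N - 1, 1) ∈ S := top_row_mem hS hne (by omega) (by omega)
          have : (N - 1, 1) ∈ oddCells S := by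
            rw [oddCells, Finset.mem_filter]
            exact ⟨hmem, by omega⟩
          have := mem_le_numRows this
          omega
      rw [mOfRows, mOfRows, ← hN, ← hMO, if_pos hpar]
      by_cases h2 : MO % 2 = 1 <;> simp [h2] <;> omega
    · -- N even : MO = N
      have hmem : (N, 1) ∈ S := top_row_mem hS hne (by omega) le_rfl
      have : (N, 1) ∈ oddCells S := by
        rw [oddCells, Finset.mem_filter]
        exact ⟨hmem, by omega⟩
      have hge := mem_le_numRows this
      have hMOe : MO = N := by omega
      rw [mOfRows, mOfRows, ← hN, ← hMO, if_neg hpar, hMOe, if_neg hpar]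

lemma countP_contentP {S : Finset (ℕ × ℕ)} (hS : IsYoungSet S) (v : ℕ) :
    (contentP (partOf S)).countP (fun x => v ≤ x)
      = ((Finset.Icc 1 (mOfRows S)).filter
          (fun r => 2*v ≤ mOfRows S - r ∨
            ((r, 2*v - (mOfRows S - r)) ∈ oddCells S ∧ mOfRows S - r < 2*v))).card := by
  classical
  set m := mOfRows S with hm
  rw [contentP_eq_map hS, Multiset.countP_map]
  have hcard : ∀ (q : ℕ → Prop) [DecidablePred q],
      ((Finset.Icc 1 m).filter q).card = (Finset.Icc 1 m).val.countP q := by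
    intro q _
    rw [Finset.card, Finset.filter_val, Multiset.countP_eq_card_filter]
  rw [← Multiset.countP_eq_card_filter, hcard]
  apply Multiset.countP_congr rfl
  intro r hr
  have hr' : 1 ≤ r ∧ r ≤ m := by
    have : r ∈ Finset.Icc 1 m := hr
    simpa [Finset.mem_Icc] using this
  have hdiv : v ≤ (rowLen S r + (m - r)) / 2 ↔ 2*v ≤ rowLen S r + (m - r) := by
    rw [Nat.le_div_iff_mul_le (by norm_num)]
    omega
  have hmodd : m % 2 = 1 := hm ▸ mOfRows_odd S
  by_cases hcase : 2*v ≤ m - r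
  · simp only [eq_iff_iff]
    constructor
    · intro _; exact Or.inl hcase
    · intro _; rw [hdiv]; omega
  · have hj : 1 ≤ 2*v - (m - r) := by omega
    have hparity : (r + (2*v - (m - r))) % 2 = 1 := by omega
    have hmem : (r, 2*v - (m - r)) ∈ oddCells S ↔ 2*v - (m - r) ≤ rowLen S r := by
      rw [oddCells, Finset.mem_filter]
      rw [mem_iff_le_rowLen hS r _ hr'.1 hj]
      constructor
      · exact fun h => h.1
      · exact fun h => ⟨h, hparity⟩
    simp only [eq_iff_iff]
    rw [hdiv]
    constructor
    · intro h
      exact Or.inr ⟨hmem.mpr (by omega), by omega⟩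
    · rintro (h | ⟨h, -⟩)
      · omega
      · have := hmem.mp h; omega

theorem content_eq_of_oddCells {S T : Finset (ℕ × ℕ)}
    (hS : IsYoungSet S) (hT : IsYoungSet T) (h : oddCells S = oddCells T) :
    contentP (partOf S) = contentP (partOf T) := by
  have hmm : mOfRows S = mOfRows T := by
    rw [mOfRows_eq_oddCells hS, mOfRows_eq_oddCells hT, h]
  apply multiset_eq_of_countP_le
  intro v
  rw [countP_contentP hS v, countP_contentP hT v, hmm, h]
/-! ### Domino tableau basics -/

variable {n : ℕ}

lemma fixedBox_eq_of (R : DominoTableau n) (i : Fin n) {F : ℕ × ℕ}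
    (hmem : F ∈ R.D i) (hpar : (F.1 + F.2) % 2 = 1)
    (huniq : ∀ q ∈ R.D i, (q.1 + q.2) % 2 = 1 → q = F) : fixedBox R i = F := by
  have hex : ∃ q ∈ R.D i, (q.1 + q.2) % 2 = 1 := ⟨F, hmem, hpar⟩
  rw [fixedBox, dif_pos hex]
  obtain ⟨h1, h2⟩ := hex.choose_spec
  exact huniq _ h1 h2

lemma varBox_eq_of (R : DominoTableau n) (i : Fin n) {O : ℕ × ℕ}
    (hmem : O ∈ R.D i) (hpar : (O.1 + O.2) % 2 = 0)
    (huniq : ∀ q ∈ R.D i, (q.1 + q.2) % 2 = 0 → q = O) : varBox R i = O := by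
  have hex : ∃ q ∈ R.D i, (q.1 + q.2) % 2 = 0 := ⟨O, hmem, hpar⟩
  rw [varBox, dif_pos hex]
  obtain ⟨h1, h2⟩ := hex.choose_spec
  exact huniq _ h1 h2

/-- Master structural lemma for a single domino. -/
lemma D_struct (R : DominoTableau n) (i : Fin n) :
    R.D i = {fixedBox R i, varBox R i} ∧
    ((fixedBox R i).1 + (fixedBox R i).2) % 2 = 1 ∧
    ((varBox R i).1 + (varBox R i).2) % 2 = 0 ∧
    1 ≤ (fixedBox R i).1 ∧ 1 ≤ (fixedBox R i).2 ∧
    1 ≤ (varBox R i).1 ∧ 1 ≤ (varBox R i).2 ∧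
    ((varBox R i = ((fixedBox R i).1 + 1, (fixedBox R i).2)) ∨
     ((varBox R i).1 + 1 = (fixedBox R i).1 ∧ (varBox R i).2 = (fixedBox R i).2) ∨
     (varBox R i = ((fixedBox R i).1, (fixedBox R i).2 + 1)) ∨
     ((varBox R i).2 + 1 = (fixedBox R i).2 ∧ (varBox R i).1 = (fixedBox R i).1)) := by
  obtain ⟨r, c, hr, hc, hcase | hcase⟩ := R.domino i
  · -- horizontal : {(r,c), (r,c+1)}
    have hmem1 : (r, c) ∈ R.D i := by rw [hcase]; simp
    have hmem2 : (r, c + 1) ∈ R.D i := by rw [hcase]; simp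
    have hmm : ∀ q ∈ R.D i, q = (r, c) ∨ q = (r, c + 1) := by
      intro q hq; rw [hcase] at hq; simpa using hq
    by_cases hpar : (r + c) % 2 = 1
    · have hF : fixedBox R i = (r, c) := by
        apply fixedBox_eq_of R i hmem1 hpar
        intro q hq hq2
        rcases hmm q hq with h | h
        · exact h
        · subst h; simp at hq2; omega
      have hO : varBox R i = (r, c + 1) := by
        apply varBox_eq_of R i hmem2 (by simp; omega)
        intro q hq hq2
        rcases hmm q hq with h | h
        · subst h; simp at hq2; omega
        · exact h
      rw [hF, hO, hcase]
      refine ⟨rfl, hpar, by simp; omega, hr, hc, hr, by omega, ?_⟩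
      right; right; left; rfl
    · have hF : fixedBox R i = (r, c + 1) := by
        apply fixedBox_eq_of R i hmem2 (by simp; omega)
        intro q hq hq2
        rcases hmm q hq with h | h
        · subst h; simp at hq2; omega
        · exact h
      have hO : varBox R i = (r, c) := by
        apply varBox_eq_of R i hmem1 (by simp; omega)
        intro q hq hq2
        rcases hmm q hq with h | h
        · exact h
        · subst h; simp at hq2; omega
      rw [hF, hO, hcase]
      refine ⟨by rw [Finset.pair_comm], by simp; omega, by simp; omega,
        hr, by omega, hr, hc, ?_⟩
      right; right; right; exact ⟨rfl, rfl⟩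
  · -- vertical : {(r,c), (r+1,c)}
    have hmem1 : (r, c) ∈ R.D i := by rw [hcase]; simp
    have hmem2 : (r + 1, c) ∈ R.D i := by rw [hcase]; simp
    have hmm : ∀ q ∈ R.D i, q = (r, c) ∨ q = (r + 1, c) := by
      intro q hq; rw [hcase] at hq; simpa using hq
    by_cases hpar : (r + c) % 2 = 1
    · have hF : fixedBox R i = (r, c) := by
        apply fixedBox_eq_of R i hmem1 hpar
        intro q hq hq2
        rcases hmm q hq with h | h
        · exact h
        · subst h; simp at hq2; omega
      have hO : varBox R i = (r + 1, c) := by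
        apply varBox_eq_of R i hmem2 (by simp; omega)
        intro q hq hq2
        rcases hmm q hq with h | h
        · subst h; simp at hq2; omega
        · exact h
      rw [hF, hO, hcase]
      refine ⟨rfl, hpar, by simp; omega, hr, hc, by omega, hc, ?_⟩
      left; rfl
    · have hF : fixedBox R i = (r + 1, c) := by
        apply fixedBox_eq_of R i hmem2 (by simp; omega)
        intro q hq hq2
        rcases hmm q hq with h | h
        · subst h; simp at hq2; omega
        · exact h
      have hO : varBox R i = (r, c) := by
        apply varBox_eq_of R i hmem1 (by simp; omega)
        intro q hq hq2
        rcases hmm q hq with h | h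
        · exact h
        · subst h; simp at hq2; omega
      rw [hF, hO, hcase]
      refine ⟨by rw [Finset.pair_comm], by simp; omega, by simp; omega,
        by omega, hc, hr, hc, ?_⟩
      right; left; exact ⟨rfl, rfl⟩

lemma fixedBox_mem (R : DominoTableau n) (i : Fin n) : fixedBox R i ∈ R.D i := by
  rw [(D_struct R i).1]; simp

lemma varBox_mem (R : DominoTableau n) (i : Fin n) : varBox R i ∈ R.D i := by
  rw [(D_struct R i).1]; simp

lemma mem_D_unique (R : DominoTableau n) {p : ℕ × ℕ} {i j : Fin n}
    (hi : p ∈ R.D i) (hj : p ∈ R.D j) : i = j := by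
  by_contra h
  exact (Finset.disjoint_left.mp (R.disj i j h) hi) hj

lemma mem_cells_iff (R : DominoTableau n) (p : ℕ × ℕ) :
    p ∈ R.cells ↔ ∃ i, p ∈ R.D i := by
  rw [DominoTableau.cells, Finset.mem_biUnion]
  simp

lemma cells_young (R : DominoTableau n) : IsYoungSet R.cells := by
  have h := R.young n
  have heq : (Finset.univ.filter (fun i : Fin n => (i : ℕ) < n)).biUnion R.D = R.cells := by
    rw [DominoTableau.cells]
    congr 1
    apply Finset.filter_true_of_mem
    intro i _
    exact i.isLt
  rwa [heq] at h

lemma standard_below (R : DominoTableau n) {i : Fin n} {p q : ℕ × ℕ}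
    (hp : p ∈ R.D i) (h1 : 1 ≤ q.1) (h2 : 1 ≤ q.2) (h3 : q.1 ≤ p.1) (h4 : q.2 ≤ p.2) :
    ∃ j : Fin n, (j : ℕ) ≤ (i : ℕ) ∧ q ∈ R.D j := by
  have hy := R.young ((i : ℕ) + 1)
  have hpU : p ∈ (Finset.univ.filter (fun j : Fin n => (j : ℕ) < (i : ℕ) + 1)).biUnion R.D := by
    rw [Finset.mem_biUnion]
    exact ⟨i, by simp, hp⟩
  have hq := hy.2 p hpU q.1 q.2 h1 h2 h3 h4
  rw [Finset.mem_biUnion] at hq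
  obtain ⟨j, hj, hqj⟩ := hq
  simp only [Finset.mem_filter, Finset.mem_univ, true_and] at hj
  exact ⟨j, by omega, by simpa using hqj⟩

lemma pair_coords (R : DominoTableau n) {p : ℕ × ℕ} {i : Fin n} (hp : p ∈ R.D i) :
    1 ≤ p.1 ∧ 1 ≤ p.2 := by
  obtain ⟨hD, _, _, h1, h2, h3, h4, _⟩ := D_struct R i
  rw [hD] at hp
  rcases Finset.mem_insert.mp hp with h | h
  · subst h; exact ⟨h1, h2⟩
  · rw [Finset.mem_singleton.mp h]; exact ⟨h3, h4⟩

lemma labelAt_coord0 (R : DominoTableau n) {p : ℕ × ℕ} (h : p.1 = 0 ∨ p.2 = 0) :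
    labelAt R p = ((-1 : ℤ) : WithTop ℤ) := by
  rw [labelAt, if_pos h]

lemma labelAt_mem (R : DominoTableau n) {p : ℕ × ℕ} {i : Fin n} (hp : p ∈ R.D i) :
    labelAt R p = (((i : ℕ) : ℤ) : WithTop ℤ) := by
  have hc := pair_coords R hp
  rw [labelAt, if_neg (by omega)]
  have hex : ∃ j : Fin n, p ∈ R.D j := ⟨i, hp⟩
  rw [dif_pos hex]
  have := hex.choose_spec
  rw [mem_D_unique R this hp]

lemma labelAt_not_mem (R : DominoTableau n) {p : ℕ × ℕ}
    (h1 : p.1 ≠ 0) (h2 : p.2 ≠ 0) (h : ∀ j : Fin n, p ∉ R.D j) : labelAt R p = ⊤ := by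
  rw [labelAt, if_neg (by omega), dif_neg]
  rintro ⟨j, hj⟩
  exact h j hj

lemma lt_labelAt_iff (R : DominoTableau n) (k : Fin n) (E : ℕ × ℕ) :
    ((((k : ℕ) : ℤ) : WithTop ℤ) < labelAt R E) ↔
      (E.1 ≠ 0 ∧ E.2 ≠ 0 ∧ ∀ j : Fin n, E ∈ R.D j → (k : ℕ) < (j : ℕ)) := by
  by_cases h0 : E.1 = 0 ∨ E.2 = 0
  · rw [labelAt_coord0 R h0]
    constructor
    · intro h
      rw [WithTop.coe_lt_coe] at h
      omega
    · intro h; omega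
  · push_neg at h0
    by_cases hmem : ∃ j : Fin n, E ∈ R.D j
    · obtain ⟨j, hj⟩ := hmem
      rw [labelAt_mem R hj, WithTop.coe_lt_coe]
      constructor
      · intro h
        refine ⟨h0.1, h0.2, fun j' hj' => ?_⟩
        rw [← mem_D_unique R hj hj']
        omega
      · intro ⟨_, _, h⟩
        have := h j hj
        omega
    · push_neg at hmem
      rw [labelAt_not_mem R h0.1 h0.2 hmem]
      constructor
      · intro _
        exact ⟨h0.1, h0.2, fun j hj => absurd hj (hmem j)⟩
      · intro _
        exact WithTop.coe_lt_top _
/-! ### The box `X(k)` of `D'(k)` -/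

noncomputable def Xbox (R : DominoTableau n) (k : Fin n) : ℕ × ℕ :=
  let F := fixedBox R k
  let O := varBox R k
  if O = (F.1 + 1, F.2) ∨ O = (F.1, F.2 - 1) then
    if (((k : ℕ) : ℤ) : WithTop ℤ) < labelAt R (F.1 - 1, F.2 + 1) then
      (F.1 - 1, F.2)
    else (F.1, F.2 + 1)
  else
    if (((k : ℕ) : ℤ) : WithTop ℤ) < labelAt R (F.1 + 1, F.2 - 1) then
      (F.1, F.2 - 1)
    else (F.1 + 1, F.2)

lemma Dprime_eq (R : DominoTableau n) (k : Fin n) :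
    Dprime R k = {fixedBox R k, Xbox R k} := by
  unfold Dprime Xbox
  dsimp only
  split_ifs <;> rfl

/-- branch 1 condition holds iff the variable box is above or to the left. -/
lemma branch1_iff (R : DominoTableau n) (k : Fin n) :
    (varBox R k = ((fixedBox R k).1 + 1, (fixedBox R k).2) ∨
      varBox R k = ((fixedBox R k).1, (fixedBox R k).2 - 1)) ↔
    (varBox R k = ((fixedBox R k).1 + 1, (fixedBox R k).2) ∨
      ((varBox R k).2 + 1 = (fixedBox R k).2 ∧ (varBox R k).1 = (fixedBox R k).1)) := by
  obtain ⟨_, _, _, _, _, h5, h6, _⟩ := D_struct R k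
  constructor
  · rintro (h | h)
    · exact Or.inl h
    · right
      rw [Prod.ext_iff] at h
      simp only at h
      omega
  · rintro (h | h)
    · exact Or.inl h
    · right
      rw [Prod.ext_iff]
      simp only
      omega

lemma Xbox_branch1_lt (R : DominoTableau n) (k : Fin n)
    (h1 : varBox R k = ((fixedBox R k).1 + 1, (fixedBox R k).2) ∨
      ((varBox R k).2 + 1 = (fixedBox R k).2 ∧ (varBox R k).1 = (fixedBox R k).1))
    (h2 : (((k : ℕ) : ℤ) : WithTop ℤ) < labelAt R ((fixedBox R k).1 - 1, (fixedBox R k).2 + 1)) :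
    Xbox R k = ((fixedBox R k).1 - 1, (fixedBox R k).2) := by
  rw [Xbox, if_pos ((branch1_iff R k).mpr h1), if_pos h2]

lemma Xbox_branch1_ge (R : DominoTableau n) (k : Fin n)
    (h1 : varBox R k = ((fixedBox R k).1 + 1, (fixedBox R k).2) ∨
      ((varBox R k).2 + 1 = (fixedBox R k).2 ∧ (varBox R k).1 = (fixedBox R k).1))
    (h2 : ¬ ((((k : ℕ) : ℤ) : WithTop ℤ) < labelAt R ((fixedBox R k).1 - 1, (fixedBox R k).2 + 1))) :
    Xbox R k = ((fixedBox R k).1, (fixedBox R k).2 + 1) := by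
  rw [Xbox, if_pos ((branch1_iff R k).mpr h1), if_neg h2]

lemma Xbox_branch2_lt (R : DominoTableau n) (k : Fin n)
    (h1 : ¬ (varBox R k = ((fixedBox R k).1 + 1, (fixedBox R k).2) ∨
      ((varBox R k).2 + 1 = (fixedBox R k).2 ∧ (varBox R k).1 = (fixedBox R k).1)))
    (h2 : (((k : ℕ) : ℤ) : WithTop ℤ) < labelAt R ((fixedBox R k).1 + 1, (fixedBox R k).2 - 1)) :
    Xbox R k = ((fixedBox R k).1, (fixedBox R k).2 - 1) := by
  rw [Xbox, if_neg (fun h => h1 ((branch1_iff R k).mp h)), if_pos h2]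

lemma Xbox_branch2_ge (R : DominoTableau n) (k : Fin n)
    (h1 : ¬ (varBox R k = ((fixedBox R k).1 + 1, (fixedBox R k).2) ∨
      ((varBox R k).2 + 1 = (fixedBox R k).2 ∧ (varBox R k).1 = (fixedBox R k).1)))
    (h2 : ¬ ((((k : ℕ) : ℤ) : WithTop ℤ) < labelAt R ((fixedBox R k).1 + 1, (fixedBox R k).2 - 1))) :
    Xbox R k = ((fixedBox R k).1 + 1, (fixedBox R k).2) := by
  rw [Xbox, if_neg (fun h => h1 ((branch1_iff R k).mp h)), if_neg h2]

lemma Xbox_parity_coords (R : DominoTableau n) (k : Fin n) :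
    ((Xbox R k).1 + (Xbox R k).2) % 2 = 0 ∧ 1 ≤ (Xbox R k).1 ∧ 1 ≤ (Xbox R k).2 := by
  obtain ⟨hD, hFp, hOp, hF1, hF2, hO1, hO2, hadj⟩ := D_struct R k
  by_cases h1 : varBox R k = ((fixedBox R k).1 + 1, (fixedBox R k).2) ∨
      ((varBox R k).2 + 1 = (fixedBox R k).2 ∧ (varBox R k).1 = (fixedBox R k).1)
  · by_cases h2 : (((k : ℕ) : ℤ) : WithTop ℤ) <
        labelAt R ((fixedBox R k).1 - 1, (fixedBox R k).2 + 1)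
    · rw [Xbox_branch1_lt R k h1 h2]
      have := ((lt_labelAt_iff R k _).mp h2).1
      simp only at this ⊢
      omega
    · rw [Xbox_branch1_ge R k h1 h2]
      simp only
      omega
  · by_cases h2 : (((k : ℕ) : ℤ) : WithTop ℤ) <
        labelAt R ((fixedBox R k).1 + 1, (fixedBox R k).2 - 1)
    · rw [Xbox_branch2_lt R k h1 h2]
      have := ((lt_labelAt_iff R k _).mp h2).2.1
      simp only at this ⊢
      omega
    · rw [Xbox_branch2_ge R k h1 h2]
      simp only
      omega
/-! ### Provider lemmas: when `Xbox R j` equals a given even cell -/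

lemma mem_odd_is_fixed (R : DominoTableau n) {p : ℕ × ℕ} {j : Fin n}
    (hp : p ∈ R.D j) (hodd : (p.1 + p.2) % 2 = 1) : fixedBox R j = p := by
  obtain ⟨hD, hFp, hOp, _⟩ := D_struct R j
  rw [hD] at hp
  rcases Finset.mem_insert.mp hp with h | h
  · exact h.symm
  · rw [Finset.mem_singleton] at h
    subst h
    omega

lemma mem_even_is_var (R : DominoTableau n) {p : ℕ × ℕ} {j : Fin n}
    (hp : p ∈ R.D j) (hev : (p.1 + p.2) % 2 = 0) : varBox R j = p := by
  obtain ⟨hD, hFp, hOp, _⟩ := D_struct R j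
  rw [hD] at hp
  rcases Finset.mem_insert.mp hp with h | h
  · subst h; omega
  · exact (Finset.mem_singleton.mp h).symm

lemma applyA (R : DominoTableau n) (j : Fin n) (r c : ℕ) (hc : 2 ≤ c)
    (hfix : fixedBox R j = (r, c - 1))
    (hO1 : varBox R j ≠ (r, c))
    (hO2 : varBox R j ≠ (r - 1, c - 1))
    (hlab : ¬((((j : ℕ) : ℤ) : WithTop ℤ) < labelAt R (r - 1, c))) :
    Xbox R j = (r, c) := by
  obtain ⟨hD, hFp, hOp, hF1, hF2, hO1', hO2', hadj⟩ := D_struct R j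
  rw [hfix] at hadj
  dsimp only at hadj
  have h1 : varBox R j = ((fixedBox R j).1 + 1, (fixedBox R j).2) ∨
      ((varBox R j).2 + 1 = (fixedBox R j).2 ∧ (varBox R j).1 = (fixedBox R j).1) := by
    rw [hfix]
    rcases hadj with h | h | h | h
    · exact Or.inl h
    · exfalso; apply hO2; rw [Prod.ext_iff]; dsimp only; omega
    · exfalso; apply hO1
      rw [h, Prod.ext_iff]; dsimp only; omega
    · exact Or.inr h
  have hlab' : ¬((((j : ℕ) : ℤ) : WithTop ℤ) <
      labelAt R ((fixedBox R j).1 - 1, (fixedBox R j).2 + 1)) := by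
    rw [hfix]
    have : (c - 1 + 1) = c := by omega
    simp only [this]
    exact hlab
  rw [Xbox_branch1_ge R j h1 hlab', hfix]
  rw [Prod.ext_iff]; dsimp only; omega

lemma applyD (R : DominoTableau n) (j : Fin n) (r c : ℕ) (hr : 2 ≤ r) (hc : 1 ≤ c)
    (hfix : fixedBox R j = (r - 1, c))
    (hO1 : varBox R j ≠ (r, c))
    (hO2 : varBox R j ≠ (r - 1, c - 1))
    (hlab : ¬((((j : ℕ) : ℤ) : WithTop ℤ) < labelAt R (r, c - 1))) :
    Xbox R j = (r, c) := by
  obtain ⟨hD, hFp, hOp, hF1, hF2, hO1', hO2', hadj⟩ := D_struct R j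
  rw [hfix] at hadj
  dsimp only at hadj
  have h1 : ¬(varBox R j = ((fixedBox R j).1 + 1, (fixedBox R j).2) ∨
      ((varBox R j).2 + 1 = (fixedBox R j).2 ∧ (varBox R j).1 = (fixedBox R j).1)) := by
    rw [hfix]
    rintro (h | h)
    · rw [Prod.ext_iff] at h; dsimp only at h
      rcases hadj with h' | h' | h' | h'
      · apply hO1; rw [h', Prod.ext_iff]; dsimp only; omega
      · omega
      · rw [Prod.ext_iff] at h'; dsimp only at h'; omega
      · omega
    · simp only at h
      rcases hadj with h' | h' | h' | h'
      · rw [Prod.ext_iff] at h'; dsimp only at h'; omega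
      · omega
      · rw [Prod.ext_iff] at h'; dsimp only at h'; omega
      · apply hO2; rw [Prod.ext_iff]; dsimp only; omega
  have hlab' : ¬((((j : ℕ) : ℤ) : WithTop ℤ) <
      labelAt R ((fixedBox R j).1 + 1, (fixedBox R j).2 - 1)) := by
    rw [hfix]
    have : (r - 1 + 1) = r := by omega
    simp only [this]
    exact hlab
  rw [Xbox_branch2_ge R j h1 hlab', hfix]
  rw [Prod.ext_iff]; dsimp only; omega

lemma applyB (R : DominoTableau n) (j : Fin n) (r c : ℕ) (hr : 1 ≤ r) (hc : 1 ≤ c)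
    (hfix : fixedBox R j = (r + 1, c))
    (hO1 : varBox R j ≠ (r, c))
    (hO2 : varBox R j ≠ (r + 1, c + 1))
    (hlab : (((j : ℕ) : ℤ) : WithTop ℤ) < labelAt R (r, c + 1)) :
    Xbox R j = (r, c) := by
  obtain ⟨hD, hFp, hOp, hF1, hF2, hO1', hO2', hadj⟩ := D_struct R j
  rw [hfix] at hadj
  dsimp only at hadj
  have h1 : varBox R j = ((fixedBox R j).1 + 1, (fixedBox R j).2) ∨
      ((varBox R j).2 + 1 = (fixedBox R j).2 ∧ (varBox R j).1 = (fixedBox R j).1) := by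
    rw [hfix]
    rcases hadj with h | h | h | h
    · exact Or.inl h
    · exfalso; apply hO1; rw [Prod.ext_iff]; dsimp only; omega
    · exfalso; apply hO2; rw [h, Prod.ext_iff]; dsimp only; omega
    · exact Or.inr h
  have hlab' : ((((j : ℕ) : ℤ) : WithTop ℤ) <
      labelAt R ((fixedBox R j).1 - 1, (fixedBox R j).2 + 1)) := by
    rw [hfix]
    have : (r + 1 - 1) = r := by omega
    simp only [this]
    exact hlab
  rw [Xbox_branch1_lt R j h1 hlab', hfix]
  rw [Prod.ext_iff]; dsimp only; omega

lemma applyC (R : DominoTableau n) (j : Fin n) (r c : ℕ) (hr : 1 ≤ r) (hc : 1 ≤ c)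
    (hfix : fixedBox R j = (r, c + 1))
    (hO1 : varBox R j ≠ (r, c))
    (hO2 : varBox R j ≠ (r + 1, c + 1))
    (hlab : (((j : ℕ) : ℤ) : WithTop ℤ) < labelAt R (r + 1, c)) :
    Xbox R j = (r, c) := by
  obtain ⟨hD, hFp, hOp, hF1, hF2, hO1', hO2', hadj⟩ := D_struct R j
  rw [hfix] at hadj
  dsimp only at hadj
  have h1 : ¬(varBox R j = ((fixedBox R j).1 + 1, (fixedBox R j).2) ∨
      ((varBox R j).2 + 1 = (fixedBox R j).2 ∧ (varBox R j).1 = (fixedBox R j).1)) := by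
    rw [hfix]
    rintro (h | h)
    · rw [Prod.ext_iff] at h; dsimp only at h
      rcases hadj with h' | h' | h' | h'
      · apply hO2; rw [h', Prod.ext_iff]; dsimp only; omega
      · omega
      · rw [Prod.ext_iff] at h'; dsimp only at h'; omega
      · omega
    · simp only at h
      rcases hadj with h' | h' | h' | h'
      · rw [Prod.ext_iff] at h'; dsimp only at h'; omega
      · omega
      · rw [Prod.ext_iff] at h'; dsimp only at h'; omega
      · apply hO1; rw [Prod.ext_iff]; dsimp only; omega
  have hlab' : ((((j : ℕ) : ℤ) : WithTop ℤ) <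
      labelAt R ((fixedBox R j).1 + 1, (fixedBox R j).2 - 1)) := by
    rw [hfix]
    have : (c + 1 - 1) = c := by omega
    simp only [this]
    exact hlab
  rw [Xbox_branch2_lt R j h1 hlab', hfix]
  rw [Prod.ext_iff]; dsimp only; omega
/-! ### Closure of `Xbox` and existence of providers -/

lemma young_mem {S : Finset (ℕ × ℕ)} (hS : IsYoungSet S) {p q : ℕ × ℕ}
    (hp : p ∈ S) (h1 : 1 ≤ q.1) (h2 : 1 ≤ q.2) (h3 : q.1 ≤ p.1) (h4 : q.2 ≤ p.2) :
    q ∈ S := by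
  have := hS.2 p hp q.1 q.2 h1 h2 h3 h4
  simpa using this

lemma not_lt_label_of_mem (R : DominoTableau n) {k j : Fin n} {E : ℕ × ℕ}
    (hE : E ∈ R.D j) (hle : (j : ℕ) ≤ (k : ℕ)) :
    ¬((((k : ℕ) : ℤ) : WithTop ℤ) < labelAt R E) := by
  rw [labelAt_mem R hE, WithTop.coe_lt_coe]
  intro h
  rw [Int.ofNat_lt] at h
  omega

lemma lt_label_of_mem (R : DominoTableau n) {k j : Fin n} {E : ℕ × ℕ}
    (hE : E ∈ R.D j) (hlt : (k : ℕ) < (j : ℕ)) :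
    (((k : ℕ) : ℤ) : WithTop ℤ) < labelAt R E := by
  rw [labelAt_mem R hE, WithTop.coe_lt_coe]
  exact_mod_cast hlt

lemma not_lt_label_coord0 (R : DominoTableau n) (k : Fin n) {E : ℕ × ℕ}
    (hE : E.1 = 0 ∨ E.2 = 0) :
    ¬((((k : ℕ) : ℤ) : WithTop ℤ) < labelAt R E) := by
  rw [labelAt_coord0 R hE, WithTop.coe_lt_coe]
  intro h
  omega

lemma lt_label_top (R : DominoTableau n) (k : Fin n) {E : ℕ × ℕ}
    (h1 : E.1 ≠ 0) (h2 : E.2 ≠ 0) (h : E ∉ R.cells) :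
    (((k : ℕ) : ℤ) : WithTop ℤ) < labelAt R E := by
  rw [labelAt_not_mem R h1 h2 (fun j hj => h ((mem_cells_iff R E).mpr ⟨j, hj⟩))]
  exact WithTop.coe_lt_top _

/-- K2' : every cell strictly dominated by `Xbox R k` lies in the diagram. -/
lemma Xbox_closure (R : DominoTableau n) (k : Fin n) {q : ℕ × ℕ}
    (h1 : 1 ≤ q.1) (h2 : 1 ≤ q.2) (h3 : q.1 ≤ (Xbox R k).1) (h4 : q.2 ≤ (Xbox R k).2)
    (hne : q ≠ Xbox R k) : q ∈ R.cells := by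
  have hY := cells_young R
  have hFmem : fixedBox R k ∈ R.cells := (mem_cells_iff R _).mpr ⟨k, fixedBox_mem R k⟩
  obtain ⟨hD, hFp, hOp, hF1, hF2, hO1c, hO2c, hadj⟩ := D_struct R k
  by_cases b1 : varBox R k = ((fixedBox R k).1 + 1, (fixedBox R k).2) ∨
      ((varBox R k).2 + 1 = (fixedBox R k).2 ∧ (varBox R k).1 = (fixedBox R k).1)
  · by_cases b2 : (((k : ℕ) : ℤ) : WithTop ℤ) <
        labelAt R ((fixedBox R k).1 - 1, (fixedBox R k).2 + 1)
    · rw [Xbox_branch1_lt R k b1 b2] at h3 h4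
      dsimp only at h3 h4
      exact young_mem hY hFmem h1 h2 (by omega) (by omega)
    · rw [Xbox_branch1_ge R k b1 b2] at h3 h4 hne
      dsimp only at h3 h4
      by_cases hq2 : q.2 ≤ (fixedBox R k).2
      · exact young_mem hY hFmem h1 h2 (by omega) hq2
      · have hq2' : q.2 = (fixedBox R k).2 + 1 := by omega
        have hq1 : q.1 + 1 ≤ (fixedBox R k).1 := by
          rcases Nat.lt_or_ge q.1 (fixedBox R k).1 with h | h
          · omega
          · exfalso; apply hne
            rw [Prod.ext_iff]; dsimp only; omega
        rw [lt_labelAt_iff] at b2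
        push_neg at b2
        obtain ⟨j, hj, -⟩ := b2 (by dsimp only; omega) (by dsimp only; omega)
        have hEmem : ((fixedBox R k).1 - 1, (fixedBox R k).2 + 1) ∈ R.cells :=
          (mem_cells_iff R _).mpr ⟨j, hj⟩
        exact young_mem hY hEmem h1 h2 (by dsimp only; omega) (by dsimp only; omega)
  · by_cases b2 : (((k : ℕ) : ℤ) : WithTop ℤ) <
        labelAt R ((fixedBox R k).1 + 1, (fixedBox R k).2 - 1)
    · rw [Xbox_branch2_lt R k b1 b2] at h3 h4
      dsimp only at h3 h4
      exact young_mem hY hFmem h1 h2 (by omega) (by omega)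
    · rw [Xbox_branch2_ge R k b1 b2] at h3 h4 hne
      dsimp only at h3 h4
      by_cases hq1 : q.1 ≤ (fixedBox R k).1
      · exact young_mem hY hFmem h1 h2 hq1 (by omega)
      · have hq1' : q.1 = (fixedBox R k).1 + 1 := by omega
        have hq2 : q.2 + 1 ≤ (fixedBox R k).2 := by
          rcases Nat.lt_or_ge q.2 (fixedBox R k).2 with h | h
          · omega
          · exfalso; apply hne
            rw [Prod.ext_iff]; dsimp only; omega
        rw [lt_labelAt_iff] at b2
        push_neg at b2
        obtain ⟨j, hj, -⟩ := b2 (by dsimp only; omega) (by dsimp only; omega)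
        have hEmem : ((fixedBox R k).1 + 1, (fixedBox R k).2 - 1) ∈ R.cells :=
          (mem_cells_iff R _).mpr ⟨j, hj⟩
        exact young_mem hY hEmem h1 h2 (by dsimp only; omega) (by dsimp only; omega)
/-! ### K1' : non-extremal variable cells are provided -/

lemma subAD (R : DominoTableau n) (i : Fin n) (r c : ℕ)
    (hv : varBox R i = (r, c)) (hr : 1 ≤ r) (hc : 1 ≤ c)
    (hne : ¬(r = 1 ∧ c = 1))
    (hFi : (fixedBox R i).1 = r + 1 ∨ (fixedBox R i).2 = c + 1) :
    ∃ j : Fin n, Xbox R j = (r, c) := by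
  have hY := cells_young R
  have hvD : (r, c) ∈ R.D i := hv ▸ varBox_mem R i
  have hvmem : (r, c) ∈ R.cells := (mem_cells_iff R _).mpr ⟨i, hvD⟩
  have hvev : (r + c) % 2 = 0 := by
    have := (D_struct R i).2.2.1
    rw [hv] at this
    exact this
  by_cases hc2 : 2 ≤ c
  · -- the left neighbour (r, c-1) exists
    have hleft : (r, c - 1) ∈ R.cells :=
      young_mem hY hvmem (by dsimp only; omega) (by dsimp only; omega)
        (by dsimp only; omega) (by dsimp only; omega)
    obtain ⟨j₁, hj₁⟩ := (mem_cells_iff R _).mp hleft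
    have hfix1 : fixedBox R j₁ = (r, c - 1) :=
      mem_odd_is_fixed R hj₁ (by dsimp only; omega)
    have hij₁ : i ≠ j₁ := by
      intro h
      rw [← h] at hfix1
      rcases hFi with h' | h' <;> rw [hfix1] at h' <;> dsimp only at h' <;> omega
    have hO1 : varBox R j₁ ≠ (r, c) := by
      intro h
      exact hij₁ (mem_D_unique R hvD (h ▸ varBox_mem R j₁))
    by_cases hr2 : 2 ≤ r
    · -- the lower neighbour (r-1, c) exists as well
      have hdown : (r - 1, c) ∈ R.cells :=
        young_mem hY hvmem (by dsimp only; omega) (by dsimp only; omega)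
          (by dsimp only; omega) (by dsimp only; omega)
      obtain ⟨j₂, hj₂⟩ := (mem_cells_iff R _).mp hdown
      have hfix2 : fixedBox R j₂ = (r - 1, c) :=
        mem_odd_is_fixed R hj₂ (by dsimp only; omega)
      have hne12 : (j₁ : ℕ) ≠ (j₂ : ℕ) := by
        intro h
        have : j₁ = j₂ := Fin.ext h
        rw [this, hfix2] at hfix1
        rw [Prod.ext_iff] at hfix1; dsimp only at hfix1
        omega
      rcases Nat.lt_or_ge (j₁ : ℕ) (j₂ : ℕ) with hlt | hge
      · -- provider D via j₂
        refine ⟨j₂, applyD R j₂ r c hr2 hc hfix2 ?_ ?_ ?_⟩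
        · intro h
          have hii : i = j₂ := mem_D_unique R hvD (h ▸ varBox_mem R j₂)
          rw [← hii] at hfix2
          rcases hFi with h' | h' <;> rw [hfix2] at h' <;> dsimp only at h' <;> omega
        · intro h
          obtain ⟨j', hj'le, hj'mem⟩ := standard_below R hj₁
            (q := ((r - 1 : ℕ), (c - 1 : ℕ))) (by dsimp only; omega)
            (by dsimp only; omega) (by dsimp only; omega) (by dsimp only; omega)
          have : j' = j₂ := mem_D_unique R hj'mem (h ▸ varBox_mem R j₂)
          omega
        · exact not_lt_label_of_mem R hj₁ (by omega)
      · -- provider A via j₁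
        have hlt : (j₂ : ℕ) < (j₁ : ℕ) := by omega
        refine ⟨j₁, applyA R j₁ r c hc2 hfix1 hO1 ?_ ?_⟩
        · intro h
          obtain ⟨j', hj'le, hj'mem⟩ := standard_below R hj₂
            (q := ((r - 1 : ℕ), (c - 1 : ℕ))) (by dsimp only; omega)
            (by dsimp only; omega) (by dsimp only; omega) (by dsimp only; omega)
          have : j' = j₁ := mem_D_unique R hj'mem (h ▸ varBox_mem R j₁)
          omega
        · exact not_lt_label_of_mem R hj₂ (by omega)
    · -- r = 1 : provider A via j₁
      refine ⟨j₁, applyA R j₁ r c hc2 hfix1 hO1 ?_ ?_⟩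
      · intro h
        have := (D_struct R j₁).2.2.2.2.2.1
        rw [h] at this; dsimp only at this; omega
      · exact not_lt_label_coord0 R j₁ (Or.inl (by dsimp only; omega))
  · -- c = 1, hence r ≥ 2 : provider D via j₂
    have hr2 : 2 ≤ r := by omega
    have hdown : (r - 1, c) ∈ R.cells :=
      young_mem hY hvmem (by dsimp only; omega) (by dsimp only; omega)
        (by dsimp only; omega) (by dsimp only; omega)
    obtain ⟨j₂, hj₂⟩ := (mem_cells_iff R _).mp hdown
    have hfix2 : fixedBox R j₂ = (r - 1, c) :=
      mem_odd_is_fixed R hj₂ (by dsimp only; omega)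
    refine ⟨j₂, applyD R j₂ r c hr2 hc hfix2 ?_ ?_ ?_⟩
    · intro h
      have hii : i = j₂ := mem_D_unique R hvD (h ▸ varBox_mem R j₂)
      rw [← hii] at hfix2
      rcases hFi with h' | h' <;> rw [hfix2] at h' <;> dsimp only at h' <;> omega
    · intro h
      have := (D_struct R j₂).2.2.2.2.2.2.1
      rw [h] at this; dsimp only at this; omega
    · exact not_lt_label_coord0 R j₂ (Or.inr (by dsimp only; omega))

lemma subBC (R : DominoTableau n) (i : Fin n) (r c : ℕ)
    (hv : varBox R i = (r, c)) (hr : 1 ≤ r) (hc : 1 ≤ c)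
    (hFi : (fixedBox R i).1 + 1 = r ∨ (fixedBox R i).2 + 1 = c)
    (hup : (r + 1, c) ∈ R.cells ∨ (r, c + 1) ∈ R.cells) :
    ∃ j : Fin n, Xbox R j = (r, c) := by
  have hY := cells_young R
  have hvD : (r, c) ∈ R.D i := hv ▸ varBox_mem R i
  have hvev : (r + c) % 2 = 0 := by
    have := (D_struct R i).2.2.1
    rw [hv] at this
    exact this
  by_cases ha : (r + 1, c) ∈ R.cells
  · obtain ⟨ja, hja⟩ := (mem_cells_iff R _).mp ha
    have hfixa : fixedBox R ja = (r + 1, c) :=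
      mem_odd_is_fixed R hja (by dsimp only; omega)
    have hO1a : varBox R ja ≠ (r, c) := by
      intro h
      have hii : i = ja := mem_D_unique R hvD (h ▸ varBox_mem R ja)
      rw [← hii] at hfixa
      rcases hFi with h' | h' <;> rw [hfixa] at h' <;> dsimp only at h' <;> omega
    by_cases hb : (r, c + 1) ∈ R.cells
    · obtain ⟨jb, hjb⟩ := (mem_cells_iff R _).mp hb
      have hfixb : fixedBox R jb = (r, c + 1) :=
        mem_odd_is_fixed R hjb (by dsimp only; omega)
      have hO1b : varBox R jb ≠ (r, c) := by
        intro h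
        have hii : i = jb := mem_D_unique R hvD (h ▸ varBox_mem R jb)
        rw [← hii] at hfixb
        rcases hFi with h' | h' <;> rw [hfixb] at h' <;> dsimp only at h' <;> omega
      have hab : (ja : ℕ) ≠ (jb : ℕ) := by
        intro h
        have : ja = jb := Fin.ext h
        rw [this, hfixb] at hfixa
        rw [Prod.ext_iff] at hfixa; dsimp only at hfixa
        omega
      rcases Nat.lt_or_ge (ja : ℕ) (jb : ℕ) with hlt | hge
      · -- provider B via ja
        refine ⟨ja, applyB R ja r c hr hc hfixa hO1a ?_ ?_⟩
        · intro h
          obtain ⟨j', hj'le, hj'mem⟩ := standard_below R (h ▸ varBox_mem R ja)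
            (q := ((r : ℕ), (c + 1 : ℕ))) (by dsimp only; omega)
            (by dsimp only; omega) (by dsimp only; omega) (by dsimp only; omega)
          have : j' = jb := mem_D_unique R hj'mem hjb
          omega
        · exact lt_label_of_mem R hjb hlt
      · -- provider C via jb
        have hlt : (jb : ℕ) < (ja : ℕ) := by omega
        refine ⟨jb, applyC R jb r c hr hc hfixb hO1b ?_ ?_⟩
        · intro h
          obtain ⟨j', hj'le, hj'mem⟩ := standard_below R (h ▸ varBox_mem R jb)
            (q := ((r + 1 : ℕ), (c : ℕ))) (by dsimp only; omega)
            (by dsimp only; omega) (by dsimp only; omega) (by dsimp only; omega)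
          have : j' = ja := mem_D_unique R hj'mem hja
          omega
        · exact lt_label_of_mem R hja hlt
    · -- only (r+1, c) present : provider B via ja
      refine ⟨ja, applyB R ja r c hr hc hfixa hO1a ?_ ?_⟩
      · intro h
        obtain ⟨j', hj'le, hj'mem⟩ := standard_below R (h ▸ varBox_mem R ja)
          (q := ((r : ℕ), (c + 1 : ℕ))) (by dsimp only; omega)
          (by dsimp only; omega) (by dsimp only; omega) (by dsimp only; omega)
        exact hb ((mem_cells_iff R _).mpr ⟨j', hj'mem⟩)
      · exact lt_label_top R ja (by dsimp only; omega) (by dsimp only; omega) hb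
  · by_cases hb : (r, c + 1) ∈ R.cells
    · obtain ⟨jb, hjb⟩ := (mem_cells_iff R _).mp hb
      have hfixb : fixedBox R jb = (r, c + 1) :=
        mem_odd_is_fixed R hjb (by dsimp only; omega)
      have hO1b : varBox R jb ≠ (r, c) := by
        intro h
        have hii : i = jb := mem_D_unique R hvD (h ▸ varBox_mem R jb)
        rw [← hii] at hfixb
        rcases hFi with h' | h' <;> rw [hfixb] at h' <;> dsimp only at h' <;> omega
      refine ⟨jb, applyC R jb r c hr hc hfixb hO1b ?_ ?_⟩
      · intro h
        obtain ⟨j', hj'le, hj'mem⟩ := standard_below R (h ▸ varBox_mem R jb)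
          (q := ((r + 1 : ℕ), (c : ℕ))) (by dsimp only; omega)
          (by dsimp only; omega) (by dsimp only; omega) (by dsimp only; omega)
        exact ha ((mem_cells_iff R _).mpr ⟨j', hj'mem⟩)
      · exact lt_label_top R jb (by dsimp only; omega) (by dsimp only; omega) ha
    · rcases hup with h | h
      · exact absurd h ha
      · exact absurd h hb

/-- K1' : if an even cell `v ≠ (1,1)` of the diagram has a cell above it or to
its right, then `v = Xbox R j` for some `j`. -/
lemma provider_exists (R : DominoTableau n) (i : Fin n)
    (hne : varBox R i ≠ (1, 1))
    (hup : ((varBox R i).1 + 1, (varBox R i).2) ∈ R.cells ∨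
           ((varBox R i).1, (varBox R i).2 + 1) ∈ R.cells) :
    ∃ j : Fin n, Xbox R j = varBox R i := by
  obtain ⟨hD, hFp, hOp, hF1, hF2, hO1c, hO2c, hadj⟩ := D_struct R i
  have hv : varBox R i = ((varBox R i).1, (varBox R i).2) := rfl
  have hne' : ¬((varBox R i).1 = 1 ∧ (varBox R i).2 = 1) := by
    intro h
    apply hne
    rw [Prod.ext_iff]; dsimp only; omega
  have goal_cast : (∃ j : Fin n, Xbox R j = ((varBox R i).1, (varBox R i).2)) →
      ∃ j : Fin n, Xbox R j = varBox R i := by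
    rintro ⟨j, hj⟩; exact ⟨j, hj⟩
  rcases hadj with h | h | h | h
  · -- F below v
    apply goal_cast
    apply subBC R i _ _ hv hO1c hO2c _ hup
    left
    rw [h]
  · -- F above v
    apply goal_cast
    apply subAD R i _ _ hv hO1c hO2c hne'
    left; omega
  · -- F left of v
    apply goal_cast
    apply subBC R i _ _ hv hO1c hO2c _ hup
    right
    rw [h]
  · -- F right of v
    apply goal_cast
    apply subAD R i _ _ hv hO1c hO2c hne'
    right; omega
/-! ### Assembly: `MTcells` is Young with the same odd cells -/

lemma mem_S0_iff (R : DominoTableau n) (c : Finset (Fin n)) (p : ℕ × ℕ) :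
    p ∈ ((Finset.univ \ c).biUnion R.D) ∪ c.biUnion (fun i => Dprime R i) ↔
      (∃ j, j ∉ c ∧ p ∈ R.D j) ∨ (∃ k ∈ c, p ∈ Dprime R k) := by
  simp [Finset.mem_union, Finset.mem_biUnion, Finset.mem_sdiff]

lemma MTcells_eq (R : DominoTableau n) (c : Finset (Fin n)) :
    MTcells R c =
      if ((1, 1) ∈ R.cells ∧ (1, 1) ∉
          (((Finset.univ \ c).biUnion R.D) ∪ c.biUnion (fun i => Dprime R i))) then
        insert (1, 1) (((Finset.univ \ c).biUnion R.D) ∪ c.biUnion (fun i => Dprime R i))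
      else (((Finset.univ \ c).biUnion R.D) ∪ c.biUnion (fun i => Dprime R i)) := rfl

lemma S0_subset_MT (R : DominoTableau n) (c : Finset (Fin n)) {p : ℕ × ℕ}
    (hp : p ∈ ((Finset.univ \ c).biUnion R.D) ∪ c.biUnion (fun i => Dprime R i)) :
    p ∈ MTcells R c := by
  rw [MTcells_eq]
  split_ifs with h
  · exact Finset.mem_insert_of_mem hp
  · exact hp

lemma one_one_mem_MT (R : DominoTableau n) (c : Finset (Fin n))
    (h : (1, 1) ∈ R.cells) : (1, 1) ∈ MTcells R c := by
  rw [MTcells_eq]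
  split_ifs with h'
  · exact Finset.mem_insert_self _ _
  · rw [not_and, not_not] at h'
    exact h' h

lemma mem_MT_cases (R : DominoTableau n) (c : Finset (Fin n)) {p : ℕ × ℕ}
    (hp : p ∈ MTcells R c) :
    p ∈ ((Finset.univ \ c).biUnion R.D) ∪ c.biUnion (fun i => Dprime R i) ∨ p = (1, 1) := by
  rw [MTcells_eq] at hp
  split_ifs at hp with h
  · rcases Finset.mem_insert.mp hp with h' | h'
    · exact Or.inr h'
    · exact Or.inl h'
  · exact Or.inl hp

lemma closure_c (R : DominoTableau n) {c : Finset (Fin n)} (hc : IsCycle R c)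
    {j k : Fin n} (hj : j ∈ c) (hint : (R.D j ∩ Dprime R k).Nonempty) : k ∈ c := by
  obtain ⟨i₀, hi₀⟩ := hc
  rw [hi₀] at hj ⊢
  exact Relation.EqvGen.trans _ _ _ hj (Relation.EqvGen.symm _ _
    (Relation.EqvGen.rel _ _ hint))

/-- CORE : a cell of the original diagram that is odd, or `(1,1)`, or has a
neighbour above or to the right inside the diagram, stays in `MTcells`. -/
lemma core_mem (R : DominoTableau n) {c : Finset (Fin n)} (hc : IsCycle R c)
    {q : ℕ × ℕ} (hq : q ∈ R.cells)
    (hcond : (q.1 + q.2) % 2 = 1 ∨ q = (1, 1) ∨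
      ((q.1 + 1, q.2) ∈ R.cells ∨ (q.1, q.2 + 1) ∈ R.cells)) :
    q ∈ MTcells R c := by
  obtain ⟨j, hj⟩ := (mem_cells_iff R q).mp hq
  by_cases hjc : j ∈ c
  · by_cases hpar : (q.1 + q.2) % 2 = 1
    · -- odd cell : it is the fixed box, which stays
      have hfix := mem_odd_is_fixed R hj hpar
      apply S0_subset_MT
      rw [mem_S0_iff]
      right
      exact ⟨j, hjc, by rw [Dprime_eq, ← hfix]; exact Finset.mem_insert_self _ _⟩
    · by_cases h11 : q = (1, 1)
      · rw [h11]; exact one_one_mem_MT R c (h11 ▸ hq)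
      · rcases hcond with h | h | h
        · exact absurd h hpar
        · exact absurd h h11
        · -- even cell with a neighbour : provided by some `Xbox`
          have hvar : varBox R j = q := by
            apply mem_even_is_var R hj
            have := (D_struct R j).2.1
            have := (D_struct R j).2.2.1
            -- q is fixed or var; parity decides
            rcases Finset.mem_insert.mp ((D_struct R j).1 ▸ hj) with h' | h'
            · exfalso; apply hpar; rw [h']; exact (D_struct R j).2.1
            · rw [Finset.mem_singleton] at h'; rw [h']; exact (D_struct R j).2.2.1
          obtain ⟨k, hk⟩ := provider_exists R j (by rw [hvar]; exact h11)
            (by rw [hvar]; exact h)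
          have hqDP : q ∈ Dprime R k := by
            rw [Dprime_eq]
            apply Finset.mem_insert_of_mem
            rw [Finset.mem_singleton, hk, hvar]
          have hkc : k ∈ c := closure_c R hc hjc ⟨q, Finset.mem_inter.mpr ⟨hj, hqDP⟩⟩
          apply S0_subset_MT
          rw [mem_S0_iff]
          exact Or.inr ⟨k, hkc, hqDP⟩
  · apply S0_subset_MT
    rw [mem_S0_iff]
    exact Or.inl ⟨j, hjc, hj⟩

lemma MT_young (R : DominoTableau n) {c : Finset (Fin n)} (hc : IsCycle R c) :
    IsYoungSet (MTcells R c) := by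
  have hY := cells_young R
  constructor
  · intro p hp
    rcases mem_MT_cases R c hp with h | h
    · rw [mem_S0_iff] at h
      rcases h with ⟨j, _, hj⟩ | ⟨k, _, hk⟩
      · exact pair_coords R hj
      · rw [Dprime_eq] at hk
        rcases Finset.mem_insert.mp hk with h' | h'
        · subst h'
          obtain ⟨_, _, _, h1, h2, _⟩ := D_struct R k
          exact ⟨h1, h2⟩
        · rw [Finset.mem_singleton] at h'
          subst h'
          obtain ⟨_, h1, h2⟩ := Xbox_parity_coords R k
          exact ⟨h1, h2⟩
    · subst h; exact ⟨le_rfl, le_rfl⟩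
  · intro p hp a b ha hb hap hbp
    set q : ℕ × ℕ := (a, b) with hqdef
    have hqa : q.1 = a := rfl
    have hqb : q.2 = b := rfl
    by_cases hqp : q = p
    · rwa [hqp]
    -- q is strictly dominated by p
    have hq1 : 1 ≤ q.1 := ha
    have hq2 : 1 ≤ q.2 := hb
    have hq3 : q.1 ≤ p.1 := hap
    have hq4 : q.2 ≤ p.2 := hbp
    have hstrict : q.1 < p.1 ∨ (q.1 = p.1 ∧ q.2 < p.2) := by
      rcases Nat.lt_or_ge q.1 p.1 with h | h
      · exact Or.inl h
      · right
        refine ⟨by omega, ?_⟩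
        rcases Nat.lt_or_ge q.2 p.2 with h' | h'
        · exact h'
        · exfalso; apply hqp; rw [Prod.ext_iff]; omega
    -- p is in the original diagram or is some Xbox
    have hpcases : p ∈ R.cells ∨ ∃ k, p = Xbox R k := by
      rcases mem_MT_cases R c hp with h | h
      · rw [mem_S0_iff] at h
        rcases h with ⟨j, _, hj⟩ | ⟨k, _, hk⟩
        · exact Or.inl ((mem_cells_iff R p).mpr ⟨j, hj⟩)
        · rw [Dprime_eq] at hk
          rcases Finset.mem_insert.mp hk with h' | h'
          · exact Or.inl ((mem_cells_iff R p).mpr ⟨k, h'.symm ▸ fixedBox_mem R k⟩)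
          · exact Or.inr ⟨k, Finset.mem_singleton.mp h'⟩
      · left; rw [h] at hp ⊢
        -- p = (1,1) but q ≠ p with q ≤ p impossible
        exfalso
        apply hqp
        rw [h, Prod.ext_iff]
        rw [h] at hq3 hq4
        constructor <;> omega
    -- q itself is in the original diagram
    have hqcells : q ∈ R.cells := by
      rcases hpcases with h | ⟨k, hk⟩
      · exact young_mem hY h hq1 hq2 hq3 hq4
      · exact Xbox_closure R k hq1 hq2 (hk ▸ hq3) (hk ▸ hq4) (fun h' => hqp (h'.trans hk.symm))
    -- q is odd, or has an in-diagram neighbour above/right, or equals (1,1)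
    apply core_mem R hc hqcells
    by_cases hpar : (q.1 + q.2) % 2 = 1
    · exact Or.inl hpar
    · right; right
      rcases hstrict with h | h
      · left
        set q' : ℕ × ℕ := (q.1 + 1, q.2) with hq'
        have hq'a : q'.1 = q.1 + 1 := rfl
        have hq'b : q'.2 = q.2 := rfl
        rcases hpcases with hpc | ⟨k, hk⟩
        · exact young_mem hY hpc (by omega) hq2 (by omega) (by omega)
        · by_cases hq'p : q' = p
          · -- q' = Xbox k : parity contradiction
            exfalso
            have := (Xbox_parity_coords R k).1
            rw [← hk, ← hq'p, hq'] at this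
            dsimp only at this
            omega
          · exact Xbox_closure R k (by omega) (by omega)
              (by rw [← hk]; omega) (by rw [← hk]; omega)
              (fun h' => hq'p (h'.trans hk.symm))
      · right
        set q' : ℕ × ℕ := (q.1, q.2 + 1) with hq'
        have hq'a : q'.1 = q.1 := rfl
        have hq'b : q'.2 = q.2 + 1 := rfl
        rcases hpcases with hpc | ⟨k, hk⟩
        · exact young_mem hY hpc hq1 (by omega) (by omega) (by omega)
        · by_cases hq'p : q' = p
          · exfalso
            have := (Xbox_parity_coords R k).1
            rw [← hk, ← hq'p, hq'] at this
            dsimp only at this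
            omega
          · exact Xbox_closure R k (by omega) (by omega)
              (by rw [← hk]; omega) (by rw [← hk]; omega)
              (fun h' => hq'p (h'.trans hk.symm))

lemma MT_oddCells (R : DominoTableau n) {c : Finset (Fin n)} (hc : IsCycle R c) :
    oddCells (MTcells R c) = oddCells R.cells := by
  ext p
  rw [oddCells, oddCells, Finset.mem_filter, Finset.mem_filter]
  constructor
  · rintro ⟨hp, hpar⟩
    refine ⟨?_, hpar⟩
    rcases mem_MT_cases R c hp with h | h
    · rw [mem_S0_iff] at h
      rcases h with ⟨j, _, hj⟩ | ⟨k, _, hk⟩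
      · exact (mem_cells_iff R p).mpr ⟨j, hj⟩
      · rw [Dprime_eq] at hk
        rcases Finset.mem_insert.mp hk with h' | h'
        · exact (mem_cells_iff R p).mpr ⟨k, h'.symm ▸ fixedBox_mem R k⟩
        · exfalso
          rw [Finset.mem_singleton] at h'
          have := (Xbox_parity_coords R k).1
          rw [← h'] at this
          omega
    · exfalso; rw [h] at hpar; omega
  · rintro ⟨hp, hpar⟩
    exact ⟨core_mem R hc hp (Or.inl hpar), hpar⟩
/-- Let `R` be a domino tableau with an even number of boxes and let `c` be a
cycle of `R`.  Then `content(part(R)) = content(part(MT(R, c)))`. -/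
theorem stmt14 (n : ℕ) (R : DominoTableau n) (c : Finset (Fin n))
    (hc : IsCycle R c) :
    contentP (partOf R.cells) = contentP (partOf (MTcells R c)) := by
  exact content_eq_of_oddCells (cells_young R) (MT_young R hc) (MT_oddCells R hc).symm

end BG
end
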